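/- arXiv:1201.0716 — 8 statements merged into one kernel-verified Lean document; each statement's English description precedes it below -/
import Mathlib

section
/- Let E be a measurable subset of R^p with finite positive Lebesgue measure, let μ be a probability measure on R^p supported in E with density f with respect to Lebesgue measure, and let F ⊆ E be measurable. Then the differential entropy Ent(μ) = -∫ f log f satisfies Ent(μ) ≤ μ(F)·log(Leb(F)) + μ(E∖F)·log(Leb(E∖F)) - μ(F)·log(μ(F)) - (1-μ(F))·log(1-μ(F)). -/
open MeasureTheory Real

lemma aux_jensen {p : ℕ} (S : Set (Fin p → ℝ))
    (hv0 : volume S ≠ 0) (hv : volume S < ⊤)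
    (f : (Fin p → ℝ) → ℝ) (hfnn : ∀ x, 0 ≤ f x)
    (hfi : IntegrableOn f S) (hgi : IntegrableOn (fun x => f x * Real.log (f x)) S) :
    (∫ x in S, f x) * Real.log ((∫ x in S, f x) / (volume S).toReal)
      ≤ ∫ x in S, f x * Real.log (f x) := by
  set ν := volume.restrict S with hν
  have huniv : ν Set.univ = volume S := by simp [hν, Measure.restrict_apply_univ]
  haveI : IsFiniteMeasure ν := ⟨by rw [huniv]; exact hv⟩
  haveI : NeZero ν := ⟨by
    intro h
    exact hv0 (by rw [← huniv, h]; simp)⟩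
  have hJ := Real.convexOn_mul_log.map_average_le continuous_mul_log.continuousOn
    isClosed_Ici (ae_of_all _ fun x => hfnn x) hfi hgi
  rw [average_eq, average_eq, measureReal_def, Measure.restrict_apply_univ] at hJ
  set v := (volume S).toReal with hvdef
  have hvpos : 0 < v := ENNReal.toReal_pos hv0 hv.ne
  set I := ∫ x in S, f x with hI
  set J := ∫ x in S, f x * Real.log (f x) with hJdef
  simp only [smul_eq_mul] at hJ
  have h2 : I / v * Real.log (I / v) ≤ J / v := by
    rw [div_eq_inv_mul, div_eq_inv_mul]
    exact hJ
  calc I * Real.log (I / v) = (I / v * Real.log (I / v)) * v := by field_simp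
    _ ≤ (J / v) * v := mul_le_mul_of_nonneg_right h2 hvpos.le
    _ = J := by field_simp

/-- entropy splitting inequality for a probability measure with
density `f` supported in `E`, split along `F ⊆ E`. -/
theorem entropy_splitting
    {p : ℕ} (E F : Set (Fin p → ℝ)) (hE : MeasurableSet E) (hF : MeasurableSet F)
    (hFE : F ⊆ E) (hEpos : 0 < volume E) (hEfin : volume E < ⊤)
    (f : (Fin p → ℝ) → ℝ) (hf : Measurable f) (hfnn : ∀ x, 0 ≤ f x)
    (μ : Measure (Fin p → ℝ)) [IsProbabilityMeasure μ]
    (hμ : μ = volume.withDensity (fun x => ENNReal.ofReal (f x)))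
    (hsupp : μ Eᶜ = 0)
    (hμF : 0 < (μ F).toReal) (hμF1 : (μ F).toReal < 1)
    (hint : Integrable (fun x => f x * Real.log (f x)))
    (hintF : IntegrableOn (fun x => f x * Real.log (f x)) F)
    (hintEF : IntegrableOn (fun x => f x * Real.log (f x)) (E \ F)) :
    -∫ x, f x * Real.log (f x) ≤
      (μ F).toReal * Real.log ((volume F).toReal)
        + (μ (E \ F)).toReal * Real.log ((volume (E \ F)).toReal)
        - (μ F).toReal * Real.log ((μ F).toReal)
        - (1 - (μ F).toReal) * Real.log (1 - (μ F).toReal) := by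
  -- integrability of f
  have hone : ∫⁻ x, ENNReal.ofReal (f x) ∂volume = 1 := by
    have h := measure_univ (μ := μ)
    rw [hμ, withDensity_apply _ MeasurableSet.univ, Measure.restrict_univ] at h
    exact h
  have hfint : Integrable f volume := by
    have := integrable_toReal_of_lintegral_ne_top (hf.ennreal_ofReal.aemeasurable)
      (by rw [hone]; exact ENNReal.one_ne_top)
    refine this.congr (ae_of_all _ fun x => ?_)
    exact ENNReal.toReal_ofReal (hfnn x)
  -- measure values as integrals
  have hval : ∀ S : Set (Fin p → ℝ), MeasurableSet S → (μ S).toReal = ∫ x in S, f x := by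
    intro S hS
    rw [hμ, withDensity_apply _ hS,
      ← integral_eq_lintegral_of_nonneg_ae (ae_of_all _ hfnn) hf.aestronglyMeasurable]
  -- f = 0 a.e. on Eᶜ, so the integral there vanishes
  have hzero : ∫ x in Eᶜ, f x * Real.log (f x) ∂volume = 0 := by
    have h0 : ∫⁻ x in Eᶜ, ENNReal.ofReal (f x) ∂volume = 0 := by
      rw [← withDensity_apply _ hE.compl, ← hμ]; exact hsupp
    rw [lintegral_eq_zero_iff hf.ennreal_ofReal] at h0
    have : (fun x => f x * Real.log (f x)) =ᵐ[volume.restrict Eᶜ] 0 := by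
      filter_upwards [h0] with x hx
      have : f x = 0 := le_antisymm (by simpa [ENNReal.ofReal_eq_zero] using hx) (hfnn x)
      simp [this]
    rw [integral_congr_ae this]; simp
  -- split the integral
  have hdisj : Disjoint F (E \ F) := disjoint_sdiff_self_right
  have hunion : F ∪ (E \ F) = E := Set.union_diff_cancel hFE
  have hsplitE : ∫ x in E, f x * Real.log (f x) ∂volume
      = (∫ x in F, f x * Real.log (f x) ∂volume)
        + ∫ x in E \ F, f x * Real.log (f x) ∂volume := by
    have h := setIntegral_union hdisj (hE.diff hF) hintF hintEF
    rwa [hunion] at h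
  have hsplit : ∫ x, f x * Real.log (f x)
      = (∫ x in F, f x * Real.log (f x) ∂volume)
        + ∫ x in E \ F, f x * Real.log (f x) ∂volume := by
    rw [← integral_add_compl hE hint, hzero, add_zero, hsplitE]
  -- volumes positive and finite
  have hvF0 : volume F ≠ 0 := by
    intro h
    have : μ F = 0 := by
      rw [hμ]; exact withDensity_absolutelyContinuous _ _ h
    rw [this] at hμF; simp at hμF
  have hvF : volume F < ⊤ := lt_of_le_of_lt (measure_mono hFE) hEfin
  -- mass of E \ F
  have hμE : μ E = 1 := by
    have h := measure_add_measure_compl (μ := μ) hE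
    rw [hsupp, add_zero, measure_univ] at h
    exact h
  have hsumE : μ F + μ (E \ F) = 1 := by
    have h := measure_inter_add_diff (μ := μ) E hF
    rw [Set.inter_eq_self_of_subset_right hFE, hμE] at h
    exact h
  have hmE : (μ (E \ F)).toReal = 1 - (μ F).toReal := by
    have := congrArg ENNReal.toReal hsumE
    rw [ENNReal.toReal_add (measure_ne_top μ F) (measure_ne_top μ (E \ F))] at this
    simp at this; linarith
  have hmEpos : 0 < (μ (E \ F)).toReal := by rw [hmE]; linarith
  have hvEF0 : volume (E \ F) ≠ 0 := by
    intro h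
    have : μ (E \ F) = 0 := by
      rw [hμ]; exact withDensity_absolutelyContinuous _ _ h
    rw [this] at hmEpos; simp at hmEpos
  have hvEF : volume (E \ F) < ⊤ := lt_of_le_of_lt (measure_mono Set.diff_subset) hEfin
  -- apply Jensen on both pieces
  have hIF : ∫ x in F, f x = (μ F).toReal := (hval F hF).symm
  have hIEF : ∫ x in E \ F, f x = (μ (E \ F)).toReal := (hval _ (hE.diff hF)).symm
  have hJF := aux_jensen F hvF0 hvF f hfnn hfint.integrableOn hintF
  have hJEF := aux_jensen (E \ F) hvEF0 hvEF f hfnn hfint.integrableOn hintEF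
  rw [hIF] at hJF
  rw [hIEF, hmE] at hJEF
  -- manipulate logs
  have hvFpos : 0 < (volume F).toReal := ENNReal.toReal_pos hvF0 hvF.ne
  have hvEFpos : 0 < (volume (E \ F)).toReal := ENNReal.toReal_pos hvEF0 hvEF.ne
  rw [Real.log_div hμF.ne' hvFpos.ne'] at hJF
  rw [Real.log_div (by linarith : (1 : ℝ) - (μ F).toReal ≠ 0) hvEFpos.ne'] at hJEF
  rw [hsplit, hmE]
  nlinarith [hJF, hJEF]
end

section
/- Let T be a measurable map between measurable spaces and μ, ν probability measures on the source space. Then Ent(T_*μ | T_*ν) ≥ Ent(μ|ν), where T_*μ denotes the pushforward measure. -/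
open MeasureTheory Real Classical
open Filter


lemma dpi_tangent {t u : ℝ} (ht : 0 ≤ t) (hu : 0 < u) :
    t - u ≤ t * Real.log t - t * Real.log u := by
  rcases eq_or_lt_of_le ht with h | h
  · simp [← h, hu.le]
  · have hlog : Real.log (u / t) ≤ u / t - 1 :=
      Real.log_le_sub_one_of_pos (div_pos hu h)
    have : Real.log u - Real.log t ≤ u / t - 1 := by
      rwa [Real.log_div hu.ne' h.ne'] at hlog
    have h2 := mul_le_mul_of_nonneg_left this (le_of_lt h)
    have h3 : t * (u / t - 1) = u - t := by field_simp
    nlinarith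

lemma dpi_phi_nonneg {t : ℝ} (ht : 0 ≤ t) : 0 ≤ t * Real.log t - t + 1 := by
  have := dpi_tangent ht one_pos
  simp only [Real.log_one, mul_zero] at this
  linarith

section key
variable {α β : Type*} [MeasurableSpace α] [MeasurableSpace β]

/-- Core inequality: the integral of `φ` of the clamped pushforward density is
bounded by the integral of `φ` of the original density. -/
lemma dpi_key (T : α → β) (hT : Measurable T)
    (μ ν : Measure α) [IsProbabilityMeasure μ] [IsProbabilityMeasure ν]
    (hμν : μ ≪ ν)
    (h_int : Integrable
      (fun x => ((μ.rnDeriv ν x).toReal) * Real.log ((μ.rnDeriv ν x).toReal)) ν)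
    {a b : ℝ} (ha : 0 < a) (ha1 : a ≤ 1) (hb : 1 ≤ b) :
    ∫ y, (max a (min (((μ.map T).rnDeriv (ν.map T) y).toReal) b)
          * Real.log (max a (min (((μ.map T).rnDeriv (ν.map T) y).toReal) b))
          - max a (min (((μ.map T).rnDeriv (ν.map T) y).toReal) b) + 1) ∂(ν.map T)
      ≤ ∫ x, ((μ.rnDeriv ν x).toReal * Real.log ((μ.rnDeriv ν x).toReal)
          - (μ.rnDeriv ν x).toReal + 1) ∂ν := by
  haveI : IsProbabilityMeasure (μ.map T) := Measure.isProbabilityMeasure_map hT.aemeasurable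
  haveI : IsProbabilityMeasure (ν.map T) := Measure.isProbabilityMeasure_map hT.aemeasurable
  set f : α → ℝ := fun x => (μ.rnDeriv ν x).toReal with hf_def
  set g : β → ℝ := fun y => ((μ.map T).rnDeriv (ν.map T) y).toReal with hg_def
  have hf_meas : Measurable f := (Measure.measurable_rnDeriv μ ν).ennreal_toReal
  have hg_meas : Measurable g := (Measure.measurable_rnDeriv _ _).ennreal_toReal
  have hf0 : ∀ x, 0 ≤ f x := fun x => ENNReal.toReal_nonneg
  have hg0 : ∀ y, 0 ≤ g y := fun y => ENNReal.toReal_nonneg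
  set c : β → ℝ := fun y => max a (min (g y) b) with hc_def
  have hc_meas : Measurable c := measurable_const.max (hg_meas.min measurable_const)
  have hca : ∀ y, a ≤ c y := fun y => le_max_left _ _
  have hcb : ∀ y, c y ≤ b := fun y => max_le (ha1.trans hb) (min_le_right _ _)
  set s : β → ℝ := fun y => Real.log (c y) with hs_def
  have hs_meas : Measurable s := hc_meas.log
  have hs_bdd : ∀ y, ‖s y‖ ≤ |Real.log a| + Real.log b := by
    intro y
    have h1 : Real.log a ≤ s y := Real.log_le_log ha (hca y)
    have h2 : s y ≤ Real.log b := Real.log_le_log (lt_of_lt_of_le ha (hca y)) (hcb y)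
    have hlb : 0 ≤ Real.log b := Real.log_nonneg hb
    rw [Real.norm_eq_abs, abs_le]
    constructor
    · calc -(|Real.log a| + Real.log b) ≤ -|Real.log a| := by linarith
        _ ≤ Real.log a := neg_abs_le _
        _ ≤ s y := h1
    · calc s y ≤ Real.log b := h2
        _ ≤ |Real.log a| + Real.log b := by
            linarith [abs_nonneg (Real.log a)]
  -- integrabilities
  have int_f : Integrable f ν := Measure.integrable_toReal_rnDeriv
  have int_g : Integrable g (ν.map T) := Measure.integrable_toReal_rnDeriv
  have int_phif : Integrable (fun x => f x * Real.log (f x) - f x + 1) ν :=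
    (h_int.sub int_f).add (integrable_const 1)
  set M : ℝ := b * (|Real.log a| + Real.log b) + b + 1 with hM_def
  have hphic_bdd : ∀ y, ‖c y * Real.log (c y) - c y + 1‖ ≤ M := by
    intro y
    have h1 : ‖c y * Real.log (c y)‖ ≤ b * (|Real.log a| + Real.log b) := by
      rw [norm_mul]
      apply mul_le_mul ?_ (hs_bdd y) (norm_nonneg _) (by linarith)
      rw [Real.norm_eq_abs, abs_of_nonneg (ha.le.trans (hca y))]
      exact hcb y
    calc ‖c y * Real.log (c y) - c y + 1‖
        ≤ ‖c y * Real.log (c y) - c y‖ + ‖(1:ℝ)‖ := norm_add_le _ _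
      _ ≤ ‖c y * Real.log (c y)‖ + ‖c y‖ + 1 := by
          have := norm_sub_le (c y * Real.log (c y)) (c y); simp only [norm_one]; linarith
      _ ≤ b * (|Real.log a| + Real.log b) + b + 1 := by
          have : ‖c y‖ ≤ b := by
            rw [Real.norm_eq_abs, abs_of_nonneg (ha.le.trans (hca y))]; exact hcb y
          linarith
  have int_phic : Integrable (fun y => c y * Real.log (c y) - c y + 1) (ν.map T) :=
    Integrable.mono' (integrable_const M)
      (((hc_meas.mul hs_meas).sub hc_meas).add measurable_const).aestronglyMeasurable
      (Filter.Eventually.of_forall hphic_bdd)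
  have int_phicT : Integrable (fun x => c (T x) * Real.log (c (T x)) - c (T x) + 1) ν :=
    Integrable.mono' (integrable_const M)
      ((((hc_meas.mul hs_meas).sub hc_meas).add measurable_const).comp hT).aestronglyMeasurable
      (Filter.Eventually.of_forall fun x => hphic_bdd (T x))
  have int_sTf : Integrable (fun x => s (T x) * f x) ν :=
    int_f.bdd_mul (hs_meas.comp hT).aestronglyMeasurable (Filter.Eventually.of_forall fun x => hs_bdd (T x))
  have int_sTcT : Integrable (fun x => s (T x) * c (T x)) ν :=
    Integrable.mono' (integrable_const ((|Real.log a| + Real.log b) * b))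
      ((hs_meas.comp hT).mul (hc_meas.comp hT)).aestronglyMeasurable
      (Filter.Eventually.of_forall fun x => by
        rw [norm_mul]
        apply mul_le_mul (hs_bdd (T x)) ?_ (norm_nonneg _) (by linarith [abs_nonneg (Real.log a), Real.log_nonneg hb])
        rw [Real.norm_eq_abs, abs_of_nonneg (ha.le.trans (hca (T x)))]; exact hcb (T x))
  -- pointwise tangent inequality
  have hpt : ∀ x, c (T x) * Real.log (c (T x)) - c (T x) + 1
      ≤ (f x * Real.log (f x) - f x + 1) - s (T x) * (f x - c (T x)) := by
    intro x
    have := dpi_tangent (hf0 x) (lt_of_lt_of_le ha (hca (T x)))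
    simp only [hs_def]
    nlinarith [dpi_phi_nonneg (hf0 x)]
  -- integral inequality over ν
  have step1 : ∫ x, (c (T x) * Real.log (c (T x)) - c (T x) + 1) ∂ν
      ≤ ∫ x, ((f x * Real.log (f x) - f x + 1) - s (T x) * (f x - c (T x))) ∂ν := by
    refine integral_mono int_phicT (int_phif.sub ?_) hpt
    exact (int_sTf.sub int_sTcT).congr
      (Filter.Eventually.of_forall fun x => (mul_sub (s (T x)) (f x) (c (T x))).symm)
  -- change of variables identities
  have hacm : μ.map T ≪ ν.map T := hμν.map hT
  have hDf : ∫ x, s (T x) * f x ∂ν = ∫ y, s y * g y ∂(ν.map T) := by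
    have e1 : ∫ x, s (T x) * f x ∂ν = ∫ x, f x • s (T x) ∂ν := by
      congr 1; funext x; rw [smul_eq_mul, mul_comm]
    have e2 : ∫ x, f x • s (T x) ∂ν = ∫ x, s (T x) ∂μ :=
      MeasureTheory.integral_rnDeriv_smul hμν
    have e3 : ∫ x, s (T x) ∂μ = ∫ y, s y ∂(μ.map T) :=
      (integral_map hT.aemeasurable hs_meas.aestronglyMeasurable).symm
    have e4 : ∫ y, s y ∂(μ.map T) = ∫ y, g y • s y ∂(ν.map T) :=
      (MeasureTheory.integral_rnDeriv_smul hacm).symm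
    rw [e1, e2, e3, e4]
    congr 1; funext y; rw [smul_eq_mul, mul_comm]
  have hDc : ∫ x, s (T x) * c (T x) ∂ν = ∫ y, s y * c y ∂(ν.map T) :=
    (integral_map hT.aemeasurable (hs_meas.mul hc_meas).aestronglyMeasurable).symm
  have int_sg : Integrable (fun y => s y * g y) (ν.map T) :=
    int_g.bdd_mul hs_meas.aestronglyMeasurable (Filter.Eventually.of_forall hs_bdd)
  have int_sc : Integrable (fun y => s y * c y) (ν.map T) :=
    Integrable.mono' (integrable_const ((|Real.log a| + Real.log b) * b))
      (hs_meas.mul hc_meas).aestronglyMeasurable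
      (Filter.Eventually.of_forall fun y => by
        rw [norm_mul]
        apply mul_le_mul (hs_bdd y) ?_ (norm_nonneg _) (by linarith [abs_nonneg (Real.log a), Real.log_nonneg hb])
        rw [Real.norm_eq_abs, abs_of_nonneg (ha.le.trans (hca y))]; exact hcb y)
  -- the correction term is nonnegative
  have hcorr : 0 ≤ ∫ x, s (T x) * (f x - c (T x)) ∂ν := by
    have e : ∫ x, s (T x) * (f x - c (T x)) ∂ν
        = ∫ y, (s y * g y - s y * c y) ∂(ν.map T) := by
      have : (fun x => s (T x) * (f x - c (T x)))
          = fun x => s (T x) * f x - s (T x) * c (T x) := by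
        funext x; ring
      rw [this, integral_sub int_sTf int_sTcT, hDf, hDc,
        ← integral_sub int_sg int_sc]
    rw [e]
    apply integral_nonneg
    intro y
    simp only [Pi.zero_apply, ← mul_sub]
    show (0:ℝ) ≤ Real.log (c y) * (g y - c y)
    rcases le_total (g y) a with h1 | h1
    · have hcy : c y = a := max_eq_left (le_trans (min_le_left _ _) h1)
      rw [hcy]
      have hla : Real.log a ≤ 0 := Real.log_nonpos ha.le ha1
      nlinarith
    · rcases le_total b (g y) with h2 | h2
      · have hcy : c y = b := by
          show max a (min (g y) b) = b
          rw [min_eq_right h2]; exact max_eq_right (ha1.trans hb)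
        rw [hcy]
        have hlb : 0 ≤ Real.log b := Real.log_nonneg hb
        nlinarith
      · have hcy : c y = g y := by
          show max a (min (g y) b) = g y
          rw [min_eq_left h2]; exact max_eq_right h1
        rw [hcy]; simp
  -- change of variables for the left side
  have hL : ∫ y, (c y * Real.log (c y) - c y + 1) ∂(ν.map T)
      = ∫ x, (c (T x) * Real.log (c (T x)) - c (T x) + 1) ∂ν :=
    integral_map hT.aemeasurable
      (((hc_meas.mul hs_meas).sub hc_meas).add measurable_const).aestronglyMeasurable
  rw [hL]
  have step2 : ∫ x, ((f x * Real.log (f x) - f x + 1) - s (T x) * (f x - c (T x))) ∂ν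
      = ∫ x, (f x * Real.log (f x) - f x + 1) ∂ν - ∫ x, s (T x) * (f x - c (T x)) ∂ν := by
    apply integral_sub int_phif
    exact (int_sTf.sub int_sTcT).congr
      (Filter.Eventually.of_forall fun x => (mul_sub (s (T x)) (f x) (c (T x))).symm)
  linarith [step1, step2.symm.le, hcorr]
end key

lemma dpi_int_clamp {β : Type*} [MeasurableSpace β] (ρ : Measure β) [IsFiniteMeasure ρ]
    {g : β → ℝ} (hg : Measurable g) {a b : ℝ} (ha : 0 < a) (hab : a ≤ b) :
    Integrable (fun y => (max a (min (g y) b)) * Real.log (max a (min (g y) b))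
      - (max a (min (g y) b)) + 1) ρ := by
  set c : β → ℝ := fun y => max a (min (g y) b) with hc_def
  have hc_meas : Measurable c := measurable_const.max (hg.min measurable_const)
  have hca : ∀ y, a ≤ c y := fun y => le_max_left _ _
  have hcb : ∀ y, c y ≤ b := fun y => max_le hab (min_le_right _ _)
  have hlog : ∀ y, |Real.log (c y)| ≤ |Real.log a| + |Real.log b| := by
    intro y
    have h1 : Real.log a ≤ Real.log (c y) := Real.log_le_log ha (hca y)
    have h2 : Real.log (c y) ≤ Real.log b := Real.log_le_log (lt_of_lt_of_le ha (hca y)) (hcb y)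
    rw [abs_le]
    constructor
    · linarith [neg_abs_le (Real.log a), abs_nonneg (Real.log b)]
    · linarith [le_abs_self (Real.log b), abs_nonneg (Real.log a)]
  refine Integrable.mono' (integrable_const (b * (|Real.log a| + |Real.log b|) + b + 1))
    (((hc_meas.mul hc_meas.log).sub hc_meas).add measurable_const).aestronglyMeasurable
    (Filter.Eventually.of_forall fun y => ?_)
  have hcnn : 0 ≤ c y := ha.le.trans (hca y)
  have h1 : ‖c y * Real.log (c y)‖ ≤ b * (|Real.log a| + |Real.log b|) := by
    rw [norm_mul, Real.norm_eq_abs, Real.norm_eq_abs, abs_of_nonneg hcnn]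
    exact mul_le_mul (hcb y) (hlog y) (abs_nonneg _)
      (le_trans hcnn (hcb y))
  calc ‖c y * Real.log (c y) - c y + 1‖
      ≤ ‖c y * Real.log (c y) - c y‖ + ‖(1:ℝ)‖ := norm_add_le _ _
    _ ≤ ‖c y * Real.log (c y)‖ + ‖c y‖ + 1 := by
        have := norm_sub_le (c y * Real.log (c y)) (c y); simp only [norm_one]; linarith
    _ ≤ b * (|Real.log a| + |Real.log b|) + b + 1 := by
        have : ‖c y‖ ≤ b := by rw [Real.norm_eq_abs, abs_of_nonneg hcnn]; exact hcb y
        linarith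

/-- Relative entropy (negative Kullback–Leibler divergence), valued in `EReal`:
`Ent(μ|ν) = -∫ (dμ/dν) log (dμ/dν) dν` when `μ ≪ ν` (and the integrand is
integrable), and `-∞` otherwise. -/
noncomputable def relEntE {α : Type*} [MeasurableSpace α] (μ ν : Measure α) : EReal :=
  if μ ≪ ν ∧ Integrable
      (fun x => ((μ.rnDeriv ν x).toReal) * Real.log ((μ.rnDeriv ν x).toReal)) ν
  then ((-∫ x, ((μ.rnDeriv ν x).toReal) * Real.log ((μ.rnDeriv ν x).toReal) ∂ν : ℝ) : EReal)
  else ⊥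

/-- data processing inequality, `Ent(T_*μ | T_*ν) ≥ Ent(μ | ν)`. -/
theorem relEntE_map_ge {α β : Type*} [MeasurableSpace α] [MeasurableSpace β]
    (T : α → β) (hT : Measurable T)
    (μ ν : Measure α) [IsProbabilityMeasure μ] [IsProbabilityMeasure ν] :
    relEntE μ ν ≤ relEntE (μ.map T) (ν.map T) := by
  by_cases h : μ ≪ ν ∧ Integrable
      (fun x => ((μ.rnDeriv ν x).toReal) * Real.log ((μ.rnDeriv ν x).toReal)) ν
  · obtain ⟨hμν, h_int⟩ := h
    haveI : IsProbabilityMeasure (μ.map T) := Measure.isProbabilityMeasure_map hT.aemeasurable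
    haveI : IsProbabilityMeasure (ν.map T) := Measure.isProbabilityMeasure_map hT.aemeasurable
    have hacm : μ.map T ≪ ν.map T := hμν.map hT
    set f : α → ℝ := fun x => (μ.rnDeriv ν x).toReal with hf_def
    set g : β → ℝ := fun y => ((μ.map T).rnDeriv (ν.map T) y).toReal with hg_def
    have hg_meas : Measurable g := (Measure.measurable_rnDeriv _ _).ennreal_toReal
    have hg0 : ∀ y, 0 ≤ g y := fun y => ENNReal.toReal_nonneg
    have int_f : Integrable f ν := Measure.integrable_toReal_rnDeriv
    have int_g : Integrable g (ν.map T) := Measure.integrable_toReal_rnDeriv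
    set C : ℝ := ∫ x, (f x * Real.log (f x) - f x + 1) ∂ν with hC_def
    have hC0 : 0 ≤ C := integral_nonneg fun x => dpi_phi_nonneg ENNReal.toReal_nonneg
    set ck : ℕ → β → ℝ := fun k y => max (((k:ℝ)+1)⁻¹) (min (g y) ((k:ℝ)+1)) with hck_def
    have hck_meas : ∀ k, Measurable (ck k) :=
      fun k => measurable_const.max (hg_meas.min measurable_const)
    have hck_pos : ∀ k y, (0:ℝ) < ck k y := fun k y =>
      lt_of_lt_of_le (by positivity) (le_max_left _ _)
    have hkey : ∀ k : ℕ, ∫ y, (ck k y * Real.log (ck k y) - ck k y + 1) ∂(ν.map T) ≤ C := by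
      intro k
      have h1 : (0:ℝ) < ((k:ℝ)+1)⁻¹ := by positivity
      have h2 : ((k:ℝ)+1)⁻¹ ≤ 1 := by
        rw [inv_le_one_iff₀]; right; linarith [Nat.cast_nonneg (α := ℝ) k]
      have h3 : (1:ℝ) ≤ (k:ℝ)+1 := by linarith [Nat.cast_nonneg (α := ℝ) k]
      exact dpi_key T hT μ ν hμν h_int h1 h2 h3
    have hint_ck : ∀ k, Integrable (fun y => ck k y * Real.log (ck k y) - ck k y + 1)
        (ν.map T) := by
      intro k
      exact dpi_int_clamp (ν.map T) hg_meas (by positivity)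
        (by rw [inv_le_iff_one_le_mul₀ (by positivity)]; nlinarith [Nat.cast_nonneg (α := ℝ) k])
    have hlint_k : ∀ k, ∫⁻ y, ENNReal.ofReal (ck k y * Real.log (ck k y) - ck k y + 1)
        ∂(ν.map T) ≤ ENNReal.ofReal C := by
      intro k
      rw [← ofReal_integral_eq_lintegral_ofReal (hint_ck k)
        (Filter.Eventually.of_forall fun y => dpi_phi_nonneg (hck_pos k y).le)]
      exact ENNReal.ofReal_le_ofReal (hkey k)
    -- pointwise convergence
    have hconv : ∀ y, Filter.Tendsto
        (fun k : ℕ => ENNReal.ofReal (ck k y * Real.log (ck k y) - ck k y + 1))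
        Filter.atTop (nhds (ENNReal.ofReal (g y * Real.log (g y) - g y + 1))) := by
      intro y
      have hck_tend : Filter.Tendsto (fun k : ℕ => ck k y) Filter.atTop (nhds (g y)) := by
        have h1 : Filter.Tendsto (fun k : ℕ => max (((k:ℝ)+1)⁻¹) (g y))
            Filter.atTop (nhds (g y)) := by
          have h0 : Filter.Tendsto (fun k : ℕ => (((k:ℝ)+1)⁻¹)) Filter.atTop (nhds 0) := by
            simpa [one_div] using tendsto_one_div_add_atTop_nhds_zero_nat (𝕜 := ℝ)
          have := h0.max (tendsto_const_nhds (x := g y))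
          rwa [max_eq_right (hg0 y)] at this
        refine h1.congr' ?_
        filter_upwards [Filter.eventually_ge_atTop ⌈g y⌉₊] with k hk
        have : g y ≤ (k:ℝ)+1 := by
          calc g y ≤ (⌈g y⌉₊ : ℝ) := Nat.le_ceil _
            _ ≤ (k:ℝ) := Nat.cast_le.2 hk
            _ ≤ (k:ℝ)+1 := by linarith
        rw [hck_def]; simp only; rw [min_eq_left this]
      have hφ : Continuous (fun t : ℝ => t * Real.log t - t + 1) :=
        (Real.continuous_mul_log.sub continuous_id).add continuous_const
      exact (ENNReal.continuous_ofReal.tendsto _).comp ((hφ.tendsto _).comp hck_tend)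
    have hliminf : ∫⁻ y, ENNReal.ofReal (g y * Real.log (g y) - g y + 1) ∂(ν.map T)
        ≤ ENNReal.ofReal C := by
      have h1 : ∫⁻ y, ENNReal.ofReal (g y * Real.log (g y) - g y + 1) ∂(ν.map T)
          = ∫⁻ y, Filter.liminf
              (fun k : ℕ => ENNReal.ofReal (ck k y * Real.log (ck k y) - ck k y + 1))
              Filter.atTop ∂(ν.map T) :=
        lintegral_congr fun y => ((hconv y).liminf_eq).symm
      rw [h1]
      refine (lintegral_liminf_le fun k =>
        ((((hck_meas k).mul (hck_meas k).log).sub (hck_meas k)).add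
          measurable_const).ennreal_ofReal).trans ?_
      calc Filter.liminf (fun k : ℕ => ∫⁻ y,
            ENNReal.ofReal (ck k y * Real.log (ck k y) - ck k y + 1) ∂(ν.map T)) Filter.atTop
          ≤ Filter.liminf (fun _ : ℕ => ENNReal.ofReal C) Filter.atTop :=
            Filter.liminf_le_liminf (Filter.Eventually.of_forall hlint_k)
        _ = ENNReal.ofReal C := Filter.liminf_const _
    have hphig_nn : (0:β → ℝ) ≤ᵐ[ν.map T] fun y => g y * Real.log (g y) - g y + 1 :=
      Filter.Eventually.of_forall fun y => by simpa using dpi_phi_nonneg (hg0 y)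
    have int_phig : Integrable (fun y => g y * Real.log (g y) - g y + 1) (ν.map T) := by
      refine ⟨(((hg_meas.mul hg_meas.log).sub hg_meas).add
        measurable_const).aestronglyMeasurable, ?_⟩
      rw [hasFiniteIntegral_iff_ofReal hphig_nn]
      exact lt_of_le_of_lt hliminf ENNReal.ofReal_lt_top
    have hphig_le : ∫ y, (g y * Real.log (g y) - g y + 1) ∂(ν.map T) ≤ C := by
      have h2 := ofReal_integral_eq_lintegral_ofReal int_phig hphig_nn
      refine (ENNReal.ofReal_le_ofReal_iff hC0).1 ?_
      rw [h2]; exact hliminf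
    have int_gg : Integrable (fun y => g y * Real.log (g y)) (ν.map T) := by
      have he : (fun y => g y * Real.log (g y))
          = fun y => (g y * Real.log (g y) - g y + 1 - 1) + g y := by funext y; ring
      rw [he]
      exact ((int_phig.sub (integrable_const 1)).add int_g)
    have hf1 : ∫ x, f x ∂ν = 1 := by
      rw [hf_def, Measure.integral_toReal_rnDeriv hμν]; simp
    have hg1 : ∫ y, g y ∂(ν.map T) = 1 := by
      rw [hg_def, Measure.integral_toReal_rnDeriv hacm]; simp
    have hCval : C = ∫ x, f x * Real.log (f x) ∂ν := by
      have e1 : ∫ x, (f x * Real.log (f x) - f x + 1) ∂ν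
          = ∫ x, (f x * Real.log (f x) - f x) ∂ν + ∫ _x, (1:ℝ) ∂ν :=
        integral_add (h_int.sub int_f) (integrable_const 1)
      have e2 : ∫ x, (f x * Real.log (f x) - f x) ∂ν
          = ∫ x, f x * Real.log (f x) ∂ν - ∫ x, f x ∂ν :=
        integral_sub h_int int_f
      rw [hC_def, e1, e2, hf1]
      simp
    have hgg_le : ∫ y, g y * Real.log (g y) ∂(ν.map T) ≤ ∫ x, f x * Real.log (f x) ∂ν := by
      have h3 : ∫ y, (g y * Real.log (g y) - g y + 1) ∂(ν.map T)
          = ∫ y, g y * Real.log (g y) ∂(ν.map T) := by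
        have e1 : ∫ y, (g y * Real.log (g y) - g y + 1) ∂(ν.map T)
            = ∫ y, (g y * Real.log (g y) - g y) ∂(ν.map T) + ∫ _y, (1:ℝ) ∂(ν.map T) :=
          integral_add (int_gg.sub int_g) (integrable_const 1)
        have e2 : ∫ y, (g y * Real.log (g y) - g y) ∂(ν.map T)
            = ∫ y, g y * Real.log (g y) ∂(ν.map T) - ∫ y, g y ∂(ν.map T) :=
          integral_sub int_gg int_g
        rw [e1, e2, hg1]
        simp
      rw [← hCval, ← h3]
      exact hphig_le
    rw [relEntE, relEntE, if_pos ⟨hμν, h_int⟩, if_pos ⟨hacm, int_gg⟩]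
    exact EReal.coe_le_coe_iff.2 (neg_le_neg hgg_le)
  · rw [relEntE, if_neg h]
    exact bot_le
end

section
/- Let E be a compact metric space and ν a probability measure on E. Then for any probability measure μ on E, Ent(μ|ν) = inf over bounded continuous real-valued functions φ on E of [log(∫_E exp(φ) dν) - ∫_E φ dμ]. -/
open MeasureTheory Real Classical BoundedContinuousFunction

set_option linter.unusedSectionVars false
set_option linter.unnecessarySimpa false
set_option linter.unusedVariables false
set_option maxHeartbeats 1000000
open Filter Topology

-- elementary real lemmas
lemma DVaux.mul_log_ge (t : ℝ) (ht : 0 ≤ t) : -(Real.exp 1)⁻¹ ≤ t * Real.log t := by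
  rcases eq_or_lt_of_le ht with h | h
  · simp [← h]; positivity
  · have h1 : Real.log (t * Real.exp 1)⁻¹ ≤ (t * Real.exp 1)⁻¹ - 1 :=
      Real.log_le_sub_one_of_pos (by positivity)
    have h2 : Real.log (t * Real.exp 1)⁻¹ = -Real.log t - 1 := by
      rw [Real.log_inv, Real.log_mul h.ne' (Real.exp_pos 1).ne', Real.log_exp]; ring
    have h3 : -Real.log t ≤ (t * Real.exp 1)⁻¹ := by linarith
    have h4 : t * (-Real.log t) ≤ t * (t * Real.exp 1)⁻¹ := by
      exact mul_le_mul_of_nonneg_left h3 ht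
    have h5 : t * (t * Real.exp 1)⁻¹ = (Real.exp 1)⁻¹ := by
      field_simp
    nlinarith

lemma DVaux.sub_le_mul_log (a b : ℝ) (ha : 0 ≤ a) (hb : 0 < b) :
    a - b ≤ a * Real.log a - a * Real.log b := by
  rcases eq_or_lt_of_le ha with h | h
  · simp [← h]; linarith
  · have h1 : Real.log (b / a) ≤ b / a - 1 := Real.log_le_sub_one_of_pos (by positivity)
    have h2 : Real.log (b / a) = Real.log b - Real.log a := Real.log_div hb.ne' h.ne'
    have h3 : a * Real.log (b / a) ≤ a * (b / a - 1) := mul_le_mul_of_nonneg_left h1 ha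
    have h4 : a * (b / a - 1) = b - a := by field_simp
    nlinarith

lemma DVaux.abs_exp_sub_exp (n a b : ℝ) (ha : a ≤ n) (hb : b ≤ n) :
    |Real.exp a - Real.exp b| ≤ Real.exp n * |a - b| := by
  wlog hab : b ≤ a generalizing a b
  · rw [abs_sub_comm, abs_sub_comm a b]; exact this b a hb ha (le_of_not_ge hab)
  have h1 : Real.exp a * (b - a + 1) ≤ Real.exp b := by
    have := Real.add_one_le_exp (b - a)
    calc Real.exp a * (b - a + 1) ≤ Real.exp a * Real.exp (b - a) :=
          mul_le_mul_of_nonneg_left this (Real.exp_pos a).le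
      _ = Real.exp b := by rw [← Real.exp_add]; ring_nf
  have h2 : Real.exp a - Real.exp b ≤ Real.exp a * (a - b) := by nlinarith [Real.exp_pos a]
  have h3 : 0 ≤ Real.exp a - Real.exp b := by
    have := Real.exp_le_exp.2 hab; linarith
  rw [abs_of_nonneg h3, abs_of_nonneg (by linarith)]
  calc Real.exp a - Real.exp b ≤ Real.exp a * (a - b) := h2
    _ ≤ Real.exp n * (a - b) := mul_le_mul_of_nonneg_right (Real.exp_le_exp.2 ha) (by linarith)

lemma DVaux.clamp_abs (n a t : ℝ) (ha : |a| ≤ n) :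
    |a - max (-n) (min n t)| ≤ |a - t| := by
  obtain ⟨ha1, ha2⟩ := abs_le.1 ha
  rcases le_total t (-n) with h | h
  · have hc : max (-n) (min n t) = -n := by
      rw [max_eq_left]; exact (min_le_right _ _).trans h
    rw [hc, abs_of_nonneg (by linarith), abs_of_nonneg (by linarith)]; linarith
  · rcases le_total n t with h2 | h2
    · have hc : max (-n) (min n t) = n := by
        rw [min_eq_left h2, max_eq_right (by linarith)]
      rw [hc, abs_of_nonpos (by linarith), abs_of_nonpos (by linarith)]; linarith
    · have hc : max (-n) (min n t) = t := by
        rw [min_eq_right h2, max_eq_right h]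
      rw [hc]


section DVmain
variable {E : Type*} [MeasurableSpace E] (ν μ : Measure E)
    [IsProbabilityMeasure ν] [IsProbabilityMeasure μ]

/-- integrability of a bounded measurable function wrt a finite measure -/
lemma DVaux.integrable_of_bound {φ : E → ℝ} (hm : Measurable φ) (n : ℝ)
    (hb : ∀ x, |φ x| ≤ n) : Integrable φ ν :=
  (integrable_const n).mono' hm.aestronglyMeasurable (Filter.Eventually.of_forall hb)

lemma DVaux.exp_integral_pos {φ : E → ℝ} (hm : Measurable φ) (n : ℝ)
    (hb : ∀ x, |φ x| ≤ n) : Real.exp (-n) ≤ ∫ x, Real.exp (φ x) ∂ν := by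
  have hint : Integrable (fun x => Real.exp (φ x)) ν := by
    refine DVaux.integrable_of_bound ν (Real.measurable_exp.comp hm) (Real.exp n) fun x => ?_
    rw [abs_of_pos (Real.exp_pos _)]
    exact Real.exp_le_exp.2 ((abs_le.1 (hb x)).2)
  calc Real.exp (-n) = ∫ _, Real.exp (-n) ∂ν := by simp
    _ ≤ ∫ x, Real.exp (φ x) ∂ν := by
        refine integral_mono (integrable_const _) hint fun x => ?_
        exact Real.exp_le_exp.2 ((abs_le.1 (hb x)).1.trans' le_rfl |>.trans' le_rfl)

/-- Gibbs' inequality. -/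
lemma DVaux.gibbs {φ : E → ℝ} (hm : Measurable φ) (n : ℝ) (hb : ∀ x, |φ x| ≤ n)
    (hac : μ ≪ ν)
    (hint : Integrable
      (fun x => ((μ.rnDeriv ν x).toReal) * Real.log ((μ.rnDeriv ν x).toReal)) ν) :
    (-∫ x, ((μ.rnDeriv ν x).toReal) * Real.log ((μ.rnDeriv ν x).toReal) ∂ν : ℝ) ≤
      Real.log (∫ x, Real.exp (φ x) ∂ν) - ∫ x, φ x ∂μ := by
  set f : E → ℝ := fun x => ((μ.rnDeriv ν x).toReal) with hf
  have hfm : Measurable f := (Measure.measurable_rnDeriv μ ν).ennreal_toReal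
  have hfnn : ∀ x, 0 ≤ f x := fun x => ENNReal.toReal_nonneg
  have hfint : Integrable f ν := Measure.integrable_toReal_rnDeriv
  have hfI : ∫ x, f x ∂ν = 1 := by
    rw [hf, Measure.integral_toReal_rnDeriv hac]; simp
  set Z : ℝ := ∫ x, Real.exp (φ x) ∂ν with hZ
  have hZpos : 0 < Z := lt_of_lt_of_le (Real.exp_pos _) (DVaux.exp_integral_pos ν hm n hb)
  have hexpint : Integrable (fun x => Real.exp (φ x)) ν := by
    refine DVaux.integrable_of_bound ν (Real.measurable_exp.comp hm) (Real.exp n) fun x => ?_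
    rw [abs_of_pos (Real.exp_pos _)]
    exact Real.exp_le_exp.2 ((abs_le.1 (hb x)).2)
  -- key pointwise inequality
  have key : ∀ x, f x - Real.exp (φ x) / Z ≤
      f x * Real.log (f x) - f x * φ x + f x * Real.log Z := by
    intro x
    have h := DVaux.sub_le_mul_log (f x) (Real.exp (φ x) / Z) (hfnn x) (by positivity)
    have hlog : Real.log (Real.exp (φ x) / Z) = φ x - Real.log Z := by
      rw [Real.log_div (Real.exp_pos _).ne' hZpos.ne', Real.log_exp]
    rw [hlog] at h
    nlinarith [h]
  -- integrabilities
  have hfφ : Integrable (fun x => f x * φ x) ν := by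
    refine (hfint.const_mul n).mono' (hfm.mul hm).aestronglyMeasurable
      (Filter.Eventually.of_forall fun x => ?_)
    rw [Real.norm_eq_abs, abs_mul, abs_of_nonneg (hfnn x)]
    exact mul_le_mul_of_nonneg_left (hb x) (hfnn x) |>.trans (by rw [mul_comm])
  have hgint : Integrable (fun x => Real.exp (φ x) / Z) ν := hexpint.div_const Z
  have hL : Integrable (fun x => f x - Real.exp (φ x) / Z) ν := hfint.sub hgint
  have hR : Integrable
      (fun x => f x * Real.log (f x) - f x * φ x + f x * Real.log Z) ν :=
    (hint.sub hfφ).add (hfint.mul_const (Real.log Z))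
  have hmono := integral_mono hL hR (key)
  have e1 : ∫ x, (f x - Real.exp (φ x) / Z) ∂ν = 1 - Z / Z := by
    rw [integral_sub hfint hgint, hfI, integral_div]
  have hsub : Integrable (fun x => f x * Real.log (f x) - f x * φ x) ν := hint.sub hfφ
  have e2 : ∫ x, (f x * Real.log (f x) - f x * φ x + f x * Real.log Z) ∂ν
      = (∫ x, f x * Real.log (f x) ∂ν) - (∫ x, f x * φ x ∂ν) + Real.log Z := by
    rw [integral_add hsub (hfint.mul_const _), integral_sub hint hfφ,
      integral_mul_const, hfI, one_mul]
  rw [e1, e2] at hmono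
  have hμφ : ∫ x, f x * φ x ∂ν = ∫ x, φ x ∂μ := by
    rw [hf]
    simpa [smul_eq_mul] using integral_rnDeriv_smul hac (f := φ)
  rw [hμφ] at hmono
  have : 1 - Z / Z = 0 := by rw [div_self hZpos.ne']; ring
  linarith [hmono]
end DVmain

section DVtop
variable {E : Type*} [MetricSpace E] [CompactSpace E] [MeasurableSpace E] [BorelSpace E]
    (ν μ : Measure E) [IsProbabilityMeasure ν] [IsProbabilityMeasure μ]

lemma DVaux.integrable_of_bound' {φ : E → ℝ} (ρ : Measure E) [IsFiniteMeasure ρ]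
    (hm : AEStronglyMeasurable φ ρ) (n : ℝ) (hb : ∀ x, |φ x| ≤ n) : Integrable φ ρ :=
  (integrable_const n).mono' hm (Filter.Eventually.of_forall hb)

lemma DVaux.exp_integral_pos' {φ : E → ℝ} (hm : AEStronglyMeasurable φ ν) (n : ℝ)
    (hb : ∀ x, |φ x| ≤ n) : Real.exp (-n) ≤ ∫ x, Real.exp (φ x) ∂ν := by
  have hint : Integrable (fun x => Real.exp (φ x)) ν := by
    refine DVaux.integrable_of_bound' ν (Real.continuous_exp.comp_aestronglyMeasurable hm)
      (Real.exp n) fun x => ?_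
    rw [abs_of_pos (Real.exp_pos _)]
    exact Real.exp_le_exp.2 ((abs_le.1 (hb x)).2)
  calc Real.exp (-n) = ∫ _, Real.exp (-n) ∂ν := by simp
    _ ≤ ∫ x, Real.exp (φ x) ∂ν :=
        integral_mono (integrable_const _) hint fun x => Real.exp_le_exp.2 (abs_le.1 (hb x)).1

/-- Lemma A: continuous approximation. -/
lemma DVaux.approx {φ : E → ℝ} (hm : Measurable φ) (n : ℝ) (hb : ∀ x, |φ x| ≤ n)
    {ε : ℝ} (hε : 0 < ε) :
    ∃ ψ : E →ᵇ ℝ, Real.log (∫ x, Real.exp (ψ x) ∂ν) - ∫ x, ψ x ∂μ ≤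
      Real.log (∫ x, Real.exp (φ x) ∂ν) - ∫ x, φ x ∂μ + ε := by
  haveI : Nonempty E := by
    by_contra h
    rw [not_nonempty_iff] at h
    have h1 : ν Set.univ = 1 := measure_univ
    simp [Set.univ_eq_empty_iff.2 h] at h1
  have hn : 0 ≤ n := (abs_nonneg _).trans (hb (Classical.arbitrary E))
  set ρ : Measure E := μ + ν with hρ
  haveI : IsFiniteMeasure ρ := by rw [hρ]; infer_instance
  have hφρ : Integrable φ ρ := DVaux.integrable_of_bound' ρ hm.aestronglyMeasurable n hb
  set δ : ℝ := ε / (Real.exp (2 * n) + 1) with hδdef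
  have hδ : 0 < δ := by positivity
  obtain ⟨g, hg, hgi⟩ := hφρ.exists_boundedContinuous_integral_sub_le hδ
  set ψ : E →ᵇ ℝ := BoundedContinuousFunction.mkOfCompact
    ⟨fun x => max (-n) (min n (g x)), by fun_prop⟩ with hψ
  have hψx : ∀ x, ψ x = max (-n) (min n (g x)) := fun x => rfl
  have hψb : ∀ x, |ψ x| ≤ n := by
    intro x; rw [hψx, abs_le]
    exact ⟨le_max_left _ _, max_le (by linarith) ((min_le_left _ _))⟩
  have hclamp : ∀ x, |φ x - ψ x| ≤ |φ x - g x| := fun x => DVaux.clamp_abs n (φ x) (g x) (hb x)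
  -- integrability of the difference wrt ρ
  have hsubm : AEStronglyMeasurable (fun x => |φ x - ψ x|) ρ :=
    ((hm.aestronglyMeasurable.sub ψ.continuous.measurable.aestronglyMeasurable).norm).congr
      (Filter.Eventually.of_forall fun x => (Real.norm_eq_abs _))
  have hsubint : Integrable (fun x => |φ x - ψ x|) ρ := by
    refine DVaux.integrable_of_bound' ρ hsubm (2 * n) fun x => ?_
    rw [abs_abs]
    calc |φ x - ψ x| ≤ |φ x| + |ψ x| := abs_sub _ _
      _ ≤ 2 * n := by linarith [hb x, hψb x]
  have hgρ : ∫ x, |φ x - ψ x| ∂ρ ≤ δ := by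
    refine le_trans (integral_mono hsubint (hφρ.sub hgi).norm fun x => ?_) hg
    rw [Real.norm_eq_abs]
    exact hclamp x
  have hkey : ∫ x, |φ x - ψ x| ∂μ ≤ δ ∧ ∫ x, |φ x - ψ x| ∂ν ≤ δ := by
    have hint1 : Integrable (fun x => |φ x - ψ x|) μ := hsubint.mono_measure (Measure.le_add_right le_rfl)
    have hint2 : Integrable (fun x => |φ x - ψ x|) ν := hsubint.mono_measure (Measure.le_add_left le_rfl)
    have hsum : ∫ x, |φ x - ψ x| ∂μ + ∫ x, |φ x - ψ x| ∂ν = ∫ x, |φ x - ψ x| ∂ρ := by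
      rw [hρ, integral_add_measure hint1 hint2]
    have h1 : 0 ≤ ∫ x, |φ x - ψ x| ∂μ := integral_nonneg fun x => abs_nonneg _
    have h2 : 0 ≤ ∫ x, |φ x - ψ x| ∂ν := integral_nonneg fun x => abs_nonneg _
    constructor <;> linarith
  obtain ⟨hdμ, hdν⟩ := hkey
  have hψm : AEStronglyMeasurable (fun x => ψ x) ν := ψ.continuous.measurable.aestronglyMeasurable
  set Zφ : ℝ := ∫ x, Real.exp (φ x) ∂ν with hZφdef
  set Zψ : ℝ := ∫ x, Real.exp (ψ x) ∂ν with hZψdef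
  have hZφ : Real.exp (-n) ≤ Zφ := DVaux.exp_integral_pos' ν hm.aestronglyMeasurable n hb
  have hZψ : Real.exp (-n) ≤ Zψ := DVaux.exp_integral_pos' ν hψm n hψb
  have hZφpos : 0 < Zφ := lt_of_lt_of_le (Real.exp_pos _) hZφ
  have hZψpos : 0 < Zψ := lt_of_lt_of_le (Real.exp_pos _) hZψ
  have hexpφ : Integrable (fun x => Real.exp (φ x)) ν := by
    refine DVaux.integrable_of_bound' ν
      (Real.continuous_exp.comp_aestronglyMeasurable hm.aestronglyMeasurable) (Real.exp n)
      fun x => ?_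
    rw [abs_of_pos (Real.exp_pos _)]; exact Real.exp_le_exp.2 ((abs_le.1 (hb x)).2)
  have hexpψ : Integrable (fun x => Real.exp (ψ x)) ν := by
    refine DVaux.integrable_of_bound' ν
      (Real.continuous_exp.comp_aestronglyMeasurable hψm) (Real.exp n) fun x => ?_
    rw [abs_of_pos (Real.exp_pos _)]; exact Real.exp_le_exp.2 ((abs_le.1 (hψb x)).2)
  have habsν : Integrable (fun x => |φ x - ψ x|) ν :=
    hsubint.mono_measure (Measure.le_add_left le_rfl)
  have hZdiff : Zψ - Zφ ≤ Real.exp n * δ := by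
    have h1 : Zψ - Zφ = ∫ x, (Real.exp (ψ x) - Real.exp (φ x)) ∂ν :=
      (integral_sub hexpψ hexpφ).symm
    have h2 : ∫ x, (Real.exp (ψ x) - Real.exp (φ x)) ∂ν ≤
        ∫ x, Real.exp n * |φ x - ψ x| ∂ν := by
      refine integral_mono (hexpψ.sub hexpφ) (habsν.const_mul _) fun x => ?_
      calc Real.exp (ψ x) - Real.exp (φ x) ≤ |Real.exp (ψ x) - Real.exp (φ x)| := le_abs_self _
        _ ≤ Real.exp n * |ψ x - φ x| :=
            DVaux.abs_exp_sub_exp n (ψ x) (φ x) (abs_le.1 (hψb x)).2 (abs_le.1 (hb x)).2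
        _ = Real.exp n * |φ x - ψ x| := by rw [abs_sub_comm]
    rw [integral_const_mul] at h2
    have h3 : Real.exp n * ∫ x, |φ x - ψ x| ∂ν ≤ Real.exp n * δ :=
      mul_le_mul_of_nonneg_left hdν (Real.exp_pos n).le
    linarith
  have hlog : Real.log Zψ - Real.log Zφ ≤ Real.exp (2 * n) * δ := by
    rcases le_total Zψ Zφ with h | h
    · have := Real.log_le_log hZψpos h
      have : (0:ℝ) ≤ Real.exp (2 * n) * δ := by positivity
      linarith [Real.log_le_log hZψpos h]
    · have h1 : Real.log (Zψ / Zφ) ≤ Zψ / Zφ - 1 :=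
        Real.log_le_sub_one_of_pos (by positivity)
      rw [Real.log_div hZψpos.ne' hZφpos.ne'] at h1
      have h2 : Zψ / Zφ - 1 = (Zψ - Zφ) / Zφ := by field_simp
      have h3 : (Zψ - Zφ) / Zφ ≤ (Real.exp n * δ) / Real.exp (-n) := by
        apply div_le_div₀ (by positivity) hZdiff (Real.exp_pos _) hZφ
      have h4 : (Real.exp n * δ) / Real.exp (-n) = Real.exp (2 * n) * δ := by
        have he : Real.exp n * Real.exp n = Real.exp (2 * n) := by
          rw [← Real.exp_add]; ring_nf
        rw [Real.exp_neg, div_eq_mul_inv, inv_inv, ← he]; ring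
      linarith
  have hμdiff : ∫ x, φ x ∂μ - ∫ x, ψ x ∂μ ≤ δ := by
    have hφμ : Integrable φ μ := hφρ.mono_measure (Measure.le_add_right le_rfl)
    have hψμ : Integrable (fun x => ψ x) μ :=
      DVaux.integrable_of_bound' μ (ψ.continuous.measurable.aestronglyMeasurable) n hψb
    have h1 : ∫ x, φ x ∂μ - ∫ x, ψ x ∂μ = ∫ x, (φ x - ψ x) ∂μ := (integral_sub hφμ hψμ).symm
    have h2 : ∫ x, (φ x - ψ x) ∂μ ≤ ∫ x, |φ x - ψ x| ∂μ := by
      refine integral_mono (hφμ.sub hψμ) (hsubint.mono_measure (Measure.le_add_right le_rfl))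
        fun x => le_abs_self _
    linarith
  have hδε : (Real.exp (2 * n) + 1) * δ = ε := by
    rw [hδdef]; field_simp
  refine ⟨ψ, ?_⟩
  have := Real.exp_pos (2 * n)
  nlinarith [hlog, hμdiff, hδε]
end DVtop

section DVtrunc
variable {E : Type*} [MeasurableSpace E] (μ ν : Measure E)
    [IsProbabilityMeasure ν] [IsProbabilityMeasure μ]

/-- truncated log-density -/
noncomputable def DVphiN (n : ℕ) (x : E) : ℝ :=
  if (μ.rnDeriv ν x).toReal = 0 then -(n : ℝ)
  else max (-(n : ℝ)) (min (n : ℝ) (Real.log ((μ.rnDeriv ν x).toReal)))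

lemma DVphiN_measurable (n : ℕ) : Measurable (DVphiN μ ν n) := by
  unfold DVphiN
  have hfm : Measurable fun x => (μ.rnDeriv ν x).toReal :=
    (Measure.measurable_rnDeriv μ ν).ennreal_toReal
  exact Measurable.ite (hfm (measurableSet_singleton 0)) measurable_const
    (measurable_const.max (measurable_const.min (Real.measurable_log.comp hfm)))

lemma DVphiN_bound (n : ℕ) (x : E) : |DVphiN μ ν n x| ≤ (n : ℝ) := by
  unfold DVphiN
  split_ifs with h
  · rw [abs_neg, abs_of_nonneg (Nat.cast_nonneg n)]
  · rw [abs_le]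
    refine ⟨le_max_left _ _, max_le (by simp [Nat.cast_nonneg]) (min_le_left _ _)⟩

lemma DVphiN_exp_le (n : ℕ) (x : E) :
    Real.exp (DVphiN μ ν n x) ≤ 1 + (μ.rnDeriv ν x).toReal := by
  set f := (μ.rnDeriv ν x).toReal with hf
  have hfnn : 0 ≤ f := ENNReal.toReal_nonneg
  unfold DVphiN
  split_ifs with h
  · calc Real.exp (-(n:ℝ)) ≤ Real.exp 0 := Real.exp_le_exp.2 (by simp [Nat.cast_nonneg])
      _ = 1 := Real.exp_zero
      _ ≤ 1 + f := by linarith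
  · have h1 : max (-(n:ℝ)) (min (n:ℝ) (Real.log f)) ≤ max 0 (Real.log f) :=
      max_le_max (by simp [Nat.cast_nonneg]) (min_le_right _ _)
    calc Real.exp (max (-(n:ℝ)) (min (n:ℝ) (Real.log f)))
        ≤ Real.exp (max 0 (Real.log f)) := Real.exp_le_exp.2 h1
      _ ≤ 1 + f := by
          rcases le_total (Real.log f) 0 with h2 | h2
          · rw [max_eq_left h2, Real.exp_zero]; linarith
          · rw [max_eq_right h2, Real.exp_log (lt_of_le_of_ne hfnn (Ne.symm h))]; linarith

lemma DVphiN_mul_abs_le (n : ℕ) (x : E) :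
    |(μ.rnDeriv ν x).toReal * DVphiN μ ν n x| ≤
      |(μ.rnDeriv ν x).toReal * Real.log ((μ.rnDeriv ν x).toReal)| := by
  set f := (μ.rnDeriv ν x).toReal with hf
  have hfnn : 0 ≤ f := ENNReal.toReal_nonneg
  unfold DVphiN
  split_ifs with h
  · have : f = 0 := h
    rw [this]; simp
  · rw [abs_mul, abs_mul]
    refine mul_le_mul_of_nonneg_left ?_ (abs_nonneg f)
    have := DVaux.clamp_abs (n : ℝ) 0 (Real.log f) (by simp [Nat.cast_nonneg])
    simpa using this
end DVtrunc

section DVtrunc2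
variable {E : Type*} [MeasurableSpace E] (μ ν : Measure E)
    [IsProbabilityMeasure ν] [IsProbabilityMeasure μ]

lemma DVphiN_ptwise_exp (x : E) (h : (μ.rnDeriv ν x).toReal ≠ 0) :
    ∀ᶠ n : ℕ in atTop, DVphiN μ ν n x = Real.log ((μ.rnDeriv ν x).toReal) := by
  filter_upwards [eventually_ge_atTop ⌈|Real.log ((μ.rnDeriv ν x).toReal)|⌉₊] with n hn
  have hn' : |Real.log ((μ.rnDeriv ν x).toReal)| ≤ (n : ℝ) :=
    (Nat.le_ceil _).trans (Nat.cast_le.2 hn)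
  obtain ⟨hl1, hl2⟩ := abs_le.1 hn'
  unfold DVphiN
  rw [if_neg h, min_eq_right hl2, max_eq_right hl1]

lemma DVphiN_tendsto_exp_int (hac : μ ≪ ν) :
    Tendsto (fun n => ∫ x, Real.exp (DVphiN μ ν n x) ∂ν) atTop (𝓝 1) := by
  have hfint : Integrable (fun x => (μ.rnDeriv ν x).toReal) ν :=
    Measure.integrable_toReal_rnDeriv
  have hfI : ∫ x, (μ.rnDeriv ν x).toReal ∂ν = 1 := by
    rw [Measure.integral_toReal_rnDeriv hac]; simp
  rw [show (1:ℝ) = ∫ x, (μ.rnDeriv ν x).toReal ∂ν from hfI.symm]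
  refine tendsto_integral_of_dominated_convergence (fun x => 1 + (μ.rnDeriv ν x).toReal)
    (fun n => (Real.measurable_exp.comp (DVphiN_measurable μ ν n)).aestronglyMeasurable)
    ((integrable_const 1).add hfint)
    (fun n => Filter.Eventually.of_forall fun x => ?_)
    (Filter.Eventually.of_forall fun x => ?_)
  · rw [Real.norm_eq_abs, abs_of_pos (Real.exp_pos _)]
    exact DVphiN_exp_le μ ν n x
  · by_cases h : (μ.rnDeriv ν x).toReal = 0
    · rw [h]
      have h1 : Tendsto (fun n : ℕ => -(n : ℝ)) atTop atBot :=
        tendsto_neg_atBot_iff.mpr tendsto_natCast_atTop_atTop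
      have h2 : Tendsto (fun n : ℕ => Real.exp (-(n:ℝ))) atTop (𝓝 0) :=
        Real.tendsto_exp_atBot.comp h1
      refine h2.congr fun n => ?_
      unfold DVphiN; rw [if_pos h]
    · have hpos : 0 < (μ.rnDeriv ν x).toReal :=
        lt_of_le_of_ne ENNReal.toReal_nonneg (Ne.symm h)
      refine Tendsto.congr' ?_ tendsto_const_nhds
      filter_upwards [DVphiN_ptwise_exp μ ν x h] with n hn
      rw [hn, Real.exp_log hpos]

lemma DVphiN_int_mu (n : ℕ) (hac : μ ≪ ν) :
    ∫ x, DVphiN μ ν n x ∂μ = ∫ x, (μ.rnDeriv ν x).toReal * DVphiN μ ν n x ∂ν := by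
  simpa [smul_eq_mul] using (integral_rnDeriv_smul hac (f := DVphiN μ ν n)).symm

lemma DVphiN_mul_integrable (n : ℕ) :
    Integrable (fun x => (μ.rnDeriv ν x).toReal * DVphiN μ ν n x) ν := by
  have hfint : Integrable (fun x => (μ.rnDeriv ν x).toReal) ν :=
    Measure.integrable_toReal_rnDeriv
  refine (hfint.const_mul (n : ℝ)).mono'
    (((Measure.measurable_rnDeriv μ ν).ennreal_toReal.mul
      (DVphiN_measurable μ ν n)).aestronglyMeasurable)
    (Filter.Eventually.of_forall fun x => ?_)
  rw [Real.norm_eq_abs, abs_mul, abs_of_nonneg ENNReal.toReal_nonneg, mul_comm ((n:ℝ))]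
  exact mul_le_mul_of_nonneg_left (DVphiN_bound μ ν n x) ENNReal.toReal_nonneg

lemma DVphiN_tendsto_mu (hac : μ ≪ ν)
    (hint : Integrable
      (fun x => ((μ.rnDeriv ν x).toReal) * Real.log ((μ.rnDeriv ν x).toReal)) ν) :
    Tendsto (fun n => ∫ x, DVphiN μ ν n x ∂μ) atTop
      (𝓝 (∫ x, ((μ.rnDeriv ν x).toReal) * Real.log ((μ.rnDeriv ν x).toReal) ∂ν)) := by
  have heq : ∀ n, ∫ x, DVphiN μ ν n x ∂μ
      = ∫ x, (μ.rnDeriv ν x).toReal * DVphiN μ ν n x ∂ν := fun n => DVphiN_int_mu μ ν n hac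
  simp only [heq]
  refine tendsto_integral_of_dominated_convergence
    (fun x => |(μ.rnDeriv ν x).toReal * Real.log ((μ.rnDeriv ν x).toReal)|)
    (fun n => ((Measure.measurable_rnDeriv μ ν).ennreal_toReal.mul
      (DVphiN_measurable μ ν n)).aestronglyMeasurable)
    hint.abs
    (fun n => Filter.Eventually.of_forall fun x => ?_)
    (Filter.Eventually.of_forall fun x => ?_)
  · rw [Real.norm_eq_abs]
    exact DVphiN_mul_abs_le μ ν n x
  · by_cases h : (μ.rnDeriv ν x).toReal = 0
    · rw [h]
      simpa using tendsto_const_nhds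
    · refine Tendsto.congr' ?_ tendsto_const_nhds
      filter_upwards [DVphiN_ptwise_exp μ ν x h] with n hn
      rw [hn]
end DVtrunc2

section DVunbounded
variable {E : Type*} [MeasurableSpace E] (μ ν : Measure E)
    [IsProbabilityMeasure ν] [IsProbabilityMeasure μ]

lemma DVphiN_mul_ge (n : ℕ) (x : E) :
    -(Real.exp 1)⁻¹ ≤ (μ.rnDeriv ν x).toReal * DVphiN μ ν n x := by
  set f := (μ.rnDeriv ν x).toReal with hfdef
  have hfnn : 0 ≤ f := ENNReal.toReal_nonneg
  by_cases h : f = 0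
  · have : f * DVphiN μ ν n x = 0 := by rw [h, zero_mul]
    rw [this]
    simp only [neg_nonpos]
    positivity
  · have hpos : 0 < f := lt_of_le_of_ne hfnn (Ne.symm h)
    have hge : min 0 (Real.log f) ≤ DVphiN μ ν n x := by
      unfold DVphiN
      rw [if_neg h]
      rcases le_total (Real.log f) 0 with h2 | h2
      · rw [min_eq_right h2, min_eq_right (h2.trans (Nat.cast_nonneg n))]
        exact le_max_right _ _
      · rw [min_eq_left h2]
        exact le_trans (le_min (Nat.cast_nonneg n) h2) (le_max_right _ _)
    have h3 : f * min 0 (Real.log f) ≤ f * DVphiN μ ν n x :=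
      mul_le_mul_of_nonneg_left hge hfnn
    have h4 : -(Real.exp 1)⁻¹ ≤ f * min 0 (Real.log f) := by
      rcases le_total (Real.log f) 0 with h2 | h2
      · rw [min_eq_right h2]; exact DVaux.mul_log_ge f hfnn
      · rw [min_eq_left h2, mul_zero]
        simp only [neg_nonpos]
        positivity
    linarith

lemma DVphiN_pos_monotone (x : E) :
    Monotone (fun n : ℕ => max ((μ.rnDeriv ν x).toReal * DVphiN μ ν n x) 0) := by
  intro m k hmk
  set f := (μ.rnDeriv ν x).toReal with hfdef
  have hfnn : 0 ≤ f := ENNReal.toReal_nonneg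
  simp only
  by_cases h : f = 0
  · simp [h]
  · rcases le_total (Real.log f) 0 with h2 | h2
    · have hz : ∀ n : ℕ, DVphiN μ ν n x ≤ 0 := by
        intro n
        unfold DVphiN
        rw [if_neg h]
        refine max_le (by simp) ((min_le_right _ _).trans h2)
      have e1 : max (f * DVphiN μ ν m x) 0 = 0 :=
        max_eq_right (mul_nonpos_of_nonneg_of_nonpos hfnn (hz m))
      have e2 : max (f * DVphiN μ ν k x) 0 = 0 :=
        max_eq_right (mul_nonpos_of_nonneg_of_nonpos hfnn (hz k))
      rw [e1, e2]
    · have hv : ∀ n : ℕ, DVphiN μ ν n x = min (n : ℝ) (Real.log f) := by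
        intro n
        unfold DVphiN
        rw [if_neg h, max_eq_right (le_trans (neg_nonpos.2 (Nat.cast_nonneg n))
          (le_min (Nat.cast_nonneg n) h2))]
      rw [hv m, hv k]
      refine max_le_max (mul_le_mul_of_nonneg_left
        (min_le_min (Nat.cast_le.2 hmk) le_rfl) hfnn) le_rfl

lemma DVphiN_lintegral_top (hac : μ ≪ ν)
    (hnint : ¬ Integrable
      (fun x => ((μ.rnDeriv ν x).toReal) * Real.log ((μ.rnDeriv ν x).toReal)) ν) :
    ∫⁻ x, ENNReal.ofReal
      (max ((μ.rnDeriv ν x).toReal * Real.log ((μ.rnDeriv ν x).toReal)) 0) ∂ν = ⊤ := by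
  by_contra hfin
  apply hnint
  have hm : Measurable (fun x => (μ.rnDeriv ν x).toReal * Real.log ((μ.rnDeriv ν x).toReal)) :=
    (Measure.measurable_rnDeriv μ ν).ennreal_toReal.mul
      (Real.measurable_log.comp (Measure.measurable_rnDeriv μ ν).ennreal_toReal)
  refine ⟨hm.aestronglyMeasurable, ?_⟩
  rw [hasFiniteIntegral_iff_norm]
  have hb : ∀ x, ENNReal.ofReal
      ‖(μ.rnDeriv ν x).toReal * Real.log ((μ.rnDeriv ν x).toReal)‖ ≤
      ENNReal.ofReal (max ((μ.rnDeriv ν x).toReal * Real.log ((μ.rnDeriv ν x).toReal)) 0)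
        + ENNReal.ofReal (Real.exp 1)⁻¹ := by
    intro x
    set z := (μ.rnDeriv ν x).toReal * Real.log ((μ.rnDeriv ν x).toReal) with hz
    have hzge : -(Real.exp 1)⁻¹ ≤ z := DVaux.mul_log_ge _ ENNReal.toReal_nonneg
    have habs : ‖z‖ ≤ max z 0 + (Real.exp 1)⁻¹ := by
      rw [Real.norm_eq_abs]
      rcases le_total 0 z with h | h
      · rw [abs_of_nonneg h, max_eq_left h]
        linarith [(inv_pos.2 (Real.exp_pos 1)).le]
      · rw [abs_of_nonpos h, max_eq_right h]; linarith
    calc ENNReal.ofReal ‖z‖ ≤ ENNReal.ofReal (max z 0 + (Real.exp 1)⁻¹) :=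
          ENNReal.ofReal_le_ofReal habs
      _ ≤ _ := ENNReal.ofReal_add_le
  calc ∫⁻ x, ENNReal.ofReal ‖(μ.rnDeriv ν x).toReal * Real.log ((μ.rnDeriv ν x).toReal)‖ ∂ν
      ≤ ∫⁻ x, (ENNReal.ofReal
          (max ((μ.rnDeriv ν x).toReal * Real.log ((μ.rnDeriv ν x).toReal)) 0)
          + ENNReal.ofReal (Real.exp 1)⁻¹) ∂ν := lintegral_mono hb
    _ = (∫⁻ x, ENNReal.ofReal
          (max ((μ.rnDeriv ν x).toReal * Real.log ((μ.rnDeriv ν x).toReal)) 0) ∂ν)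
          + ENNReal.ofReal (Real.exp 1)⁻¹ := by
        rw [lintegral_add_right _ measurable_const, lintegral_const, measure_univ, mul_one]
    _ < ⊤ := by
        rw [ENNReal.add_lt_top]
        exact ⟨lt_top_iff_ne_top.2 hfin, ENNReal.ofReal_lt_top⟩

lemma DVphiN_unbounded (hac : μ ≪ ν)
    (hnint : ¬ Integrable
      (fun x => ((μ.rnDeriv ν x).toReal) * Real.log ((μ.rnDeriv ν x).toReal)) ν) :
    ∀ M : ℝ, ∃ n : ℕ, M ≤ ∫ x, DVphiN μ ν n x ∂μ := by
  intro M
  set f := fun x => (μ.rnDeriv ν x).toReal with hfdef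
  have hfm : Measurable f := (Measure.measurable_rnDeriv μ ν).ennreal_toReal
  have hfint : Integrable f ν := Measure.integrable_toReal_rnDeriv
  set pos : ℕ → E → ℝ := fun n x => max (f x * DVphiN μ ν n x) 0 with hposdef
  have hposm : ∀ n, Measurable (pos n) :=
    fun n => ((hfm.mul (DVphiN_measurable μ ν n)).max measurable_const)
  have hposint : ∀ n, Integrable (pos n) ν := by
    intro n
    refine (hfint.const_mul (n : ℝ)).mono' (hposm n).aestronglyMeasurable
      (Filter.Eventually.of_forall fun x => ?_)
    rw [Real.norm_eq_abs, abs_of_nonneg (le_max_right _ _)]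
    refine max_le ?_ (by positivity)
    calc f x * DVphiN μ ν n x ≤ f x * (n : ℝ) :=
          mul_le_mul_of_nonneg_left ((le_abs_self _).trans (DVphiN_bound μ ν n x))
            ENNReal.toReal_nonneg
      _ = (n : ℝ) * f x := mul_comm _ _
  -- lintegral tends to ⊤
  have htend : Tendsto (fun n => ∫⁻ x, ENNReal.ofReal (pos n x) ∂ν) atTop
      (𝓝 (∫⁻ x, ENNReal.ofReal (max (f x * Real.log (f x)) 0) ∂ν)) := by
    refine lintegral_tendsto_of_tendsto_of_monotone
      (fun n => ((hposm n).ennreal_ofReal).aemeasurable)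
      (Filter.Eventually.of_forall fun x => ?_)
      (Filter.Eventually.of_forall fun x => ?_)
    · intro m k hmk
      exact ENNReal.ofReal_le_ofReal (DVphiN_pos_monotone μ ν x hmk)
    · refine (ENNReal.continuous_ofReal.tendsto _).comp ?_
      by_cases h : f x = 0
      · refine Tendsto.congr' ?_ tendsto_const_nhds
        refine Filter.Eventually.of_forall fun n => ?_
        have : f x * DVphiN μ ν n x = 0 := by rw [h, zero_mul]
        simp only [hposdef, this, h, zero_mul]
      · refine Tendsto.congr' ?_ tendsto_const_nhds
        filter_upwards [DVphiN_ptwise_exp μ ν x h] with n hn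
        simp only [hposdef, hn]; rfl
  rw [DVphiN_lintegral_top μ ν hac hnint] at htend
  have hev : ∀ᶠ n : ℕ in atTop,
      ENNReal.ofReal (M + (Real.exp 1)⁻¹) < ∫⁻ x, ENNReal.ofReal (pos n x) ∂ν :=
    htend.eventually (eventually_gt_nhds ENNReal.ofReal_lt_top)
  obtain ⟨n, hn⟩ := hev.exists
  refine ⟨n, ?_⟩
  have hlt : ∫⁻ x, ENNReal.ofReal (pos n x) ∂ν ≠ ⊤ := by
    have := (hposint n).2
    rw [hasFiniteIntegral_iff_norm] at this
    refine ne_of_lt (lt_of_le_of_lt (lintegral_mono fun x => ?_) this)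
    exact ENNReal.ofReal_le_ofReal (le_abs_self _)
  have hM : M + (Real.exp 1)⁻¹ ≤ ∫ x, pos n x ∂ν := by
    have heq : ∫ x, pos n x ∂ν = (∫⁻ x, ENNReal.ofReal (pos n x) ∂ν).toReal :=
      integral_eq_lintegral_of_nonneg_ae
        (Filter.Eventually.of_forall fun x => le_max_right _ _)
        (hposm n).aestronglyMeasurable
    rw [heq]
    exact (ENNReal.ofReal_le_iff_le_toReal hlt).1 hn.le
  -- ∫ f·φN ≥ ∫ pos - e⁻¹
  have hmono : ∫ x, (pos n x - (Real.exp 1)⁻¹) ∂ν ≤ ∫ x, f x * DVphiN μ ν n x ∂ν := by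
    refine integral_mono ((hposint n).sub (integrable_const _)) (DVphiN_mul_integrable μ ν n)
      fun x => ?_
    have h1 := DVphiN_mul_ge μ ν n x
    simp only [hposdef]
    rcases le_total 0 (f x * DVphiN μ ν n x) with h | h
    · rw [max_eq_left h]
      linarith [(inv_pos.2 (Real.exp_pos 1)).le]
    · rw [max_eq_right h]
      simp only [zero_sub]
      linarith
  rw [integral_sub (hposint n) (integrable_const _), integral_const, probReal_univ] at hmono
  simp only [ENNReal.toReal_one, one_smul, smul_eq_mul] at hmono
  rw [DVphiN_int_mu μ ν n hac]
  linarith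
end DVunbounded

section DVnotac
variable {E : Type*} [MeasurableSpace E] (μ ν : Measure E)
    [IsProbabilityMeasure ν] [IsProbabilityMeasure μ]

lemma DVphiN_log_le (n : ℕ) :
    Real.log (∫ x, Real.exp (DVphiN μ ν n x) ∂ν) ≤ Real.log 2 := by
  have hfint : Integrable (fun x => (μ.rnDeriv ν x).toReal) ν :=
    Measure.integrable_toReal_rnDeriv
  have hexpint : Integrable (fun x => Real.exp (DVphiN μ ν n x)) ν := by
    refine ((integrable_const (1:ℝ)).add hfint).mono'
      ((Real.measurable_exp.comp (DVphiN_measurable μ ν n)).aestronglyMeasurable)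
      (Filter.Eventually.of_forall fun x => ?_)
    rw [Real.norm_eq_abs, abs_of_pos (Real.exp_pos _)]
    exact DVphiN_exp_le μ ν n x
  have h2 : ∫ x, Real.exp (DVphiN μ ν n x) ∂ν ≤ 2 := by
    have hle : ∫ x, Real.exp (DVphiN μ ν n x) ∂ν ≤ ∫ x, (1 + (μ.rnDeriv ν x).toReal) ∂ν :=
      integral_mono hexpint ((integrable_const 1).add hfint) fun x => DVphiN_exp_le μ ν n x
    have h3 : ∫ x, (1 + (μ.rnDeriv ν x).toReal) ∂ν
        = 1 + ∫ x, (μ.rnDeriv ν x).toReal ∂ν := by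
      rw [integral_add (integrable_const 1) hfint, integral_const, probReal_univ]
      simp
    have h4 : ∫ x, (μ.rnDeriv ν x).toReal ∂ν ≤ 1 := by
      have h5 := Measure.setIntegral_toReal_rnDeriv_le (μ := μ) (ν := ν) (s := Set.univ)
        (measure_ne_top μ _)
      rw [setIntegral_univ] at h5
      simpa using h5
    linarith
  have hpos : 0 < ∫ x, Real.exp (DVphiN μ ν n x) ∂ν :=
    lt_of_lt_of_le (Real.exp_pos _)
      (DVaux.exp_integral_pos ν (DVphiN_measurable μ ν n) n (DVphiN_bound μ ν n))
  exact Real.log_le_log hpos h2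

lemma DV_not_ac (hnac : ¬ μ ≪ ν) (M : ℝ) :
    ∃ (φ : E → ℝ) (c : ℝ), Measurable φ ∧ (∀ x, |φ x| ≤ c) ∧
      Real.log (∫ x, Real.exp (φ x) ∂ν) - ∫ x, φ x ∂μ ≤ M := by
  have h2 : ∃ s, ν s = 0 ∧ μ s ≠ 0 := by
    by_contra h
    push_neg at h
    exact hnac (Measure.AbsolutelyContinuous.mk fun s _ hνs => h s hνs)
  obtain ⟨s, hνs, hμs⟩ := h2
  set t := toMeasurable ν s with htdef
  have ht : MeasurableSet t := measurableSet_toMeasurable ν s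
  have hνt : ν t = 0 := by rw [htdef, measure_toMeasurable]; exact hνs
  have hμt : μ t ≠ 0 := by
    intro h
    exact hμs (le_antisymm (le_trans (measure_mono (subset_toMeasurable ν s)) h.le)
      zero_le)
  set m : ℝ := (μ t).toReal with hmdef
  have hm : 0 < m := ENNReal.toReal_pos hμt (measure_ne_top μ t)
  set c : ℝ := |M| / m + 1 with hcdef
  have hc : 0 < c := by positivity
  refine ⟨t.indicator (fun _ => c), c, measurable_const.indicator ht, fun x => ?_, ?_⟩
  · rw [Set.indicator_apply]
    split_ifs
    · rw [abs_of_pos hc]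
    · rw [abs_zero]; exact hc.le
  · have hexp : ∫ x, Real.exp (t.indicator (fun _ => c) x) ∂ν = 1 := by
      have hae : (fun x => Real.exp (t.indicator (fun _ => c) x)) =ᵐ[ν] fun _ => 1 := by
        filter_upwards [measure_eq_zero_iff_ae_notMem.mp hνt] with x hx
        rw [Set.indicator_of_notMem hx, Real.exp_zero]
      rw [integral_congr_ae hae]
      simp
    have hind : ∫ x, t.indicator (fun _ => c) x ∂μ = m * c := by
      rw [integral_indicator_const _ ht]
      simp [hmdef, smul_eq_mul, Measure.real]
    rw [hexp, hind, Real.log_one]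
    have hcm : m * c = |M| + m := by
      rw [hcdef]; field_simp
    have := neg_abs_le M
    linarith
end DVnotac

/-- Donsker–Varadhan variational formula on a compact metric space:
`Ent(μ|ν) = inf_φ [ log ∫ e^φ dν - ∫ φ dμ ]` over bounded continuous `φ`. -/
theorem relEntE_donsker_varadhan
    {E : Type*} [MetricSpace E] [CompactSpace E]
    [MeasurableSpace E] [BorelSpace E]
    (ν μ : Measure E) [IsProbabilityMeasure ν] [IsProbabilityMeasure μ] :
    relEntE μ ν =
      ⨅ φ : E →ᵇ ℝ,
        ((Real.log (∫ x, Real.exp (φ x) ∂ν) - ∫ x, φ x ∂μ : ℝ) : EReal) := by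
  refine le_antisymm (le_iInf fun ψ => ?_) ?_
  · rw [relEntE]
    split_ifs with h
    · obtain ⟨hac, hint⟩ := h
      have hb : ∀ x, |ψ x| ≤ ‖ψ‖ := fun x => by
        simpa [Real.norm_eq_abs] using ψ.norm_coe_le_norm x
      exact EReal.coe_le_coe_iff.2 (DVaux.gibbs ν μ ψ.continuous.measurable ‖ψ‖ hb hac hint)
    · exact bot_le
  · have key : ∀ M : ℝ, relEntE μ ν < (M : EReal) →
        (⨅ φ : E →ᵇ ℝ,
          ((Real.log (∫ x, Real.exp (φ x) ∂ν) - ∫ x, φ x ∂μ : ℝ) : EReal)) ≤ (M : EReal) := by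
      intro M hM
      rw [relEntE] at hM
      by_cases h : μ ≪ ν ∧ Integrable
          (fun x => ((μ.rnDeriv ν x).toReal) * Real.log ((μ.rnDeriv ν x).toReal)) ν
      · rw [if_pos h] at hM
        obtain ⟨hac, hint⟩ := h
        set r : ℝ :=
          -∫ x, ((μ.rnDeriv ν x).toReal) * Real.log ((μ.rnDeriv ν x).toReal) ∂ν with hr
        have hrM : r < M := EReal.coe_lt_coe_iff.1 hM
        have hlogt : Tendsto
            (fun n => Real.log (∫ x, Real.exp (DVphiN μ ν n x) ∂ν)) atTop (𝓝 0) := by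
          have h1 := (Real.continuousAt_log one_ne_zero).tendsto.comp
            (DVphiN_tendsto_exp_int μ ν hac)
          simpa [Function.comp_def] using h1
        have h2 : Tendsto
            (fun n => Real.log (∫ x, Real.exp (DVphiN μ ν n x) ∂ν)
              - ∫ x, DVphiN μ ν n x ∂μ) atTop (𝓝 r) := by
          have := hlogt.sub (DVphiN_tendsto_mu μ ν hac hint)
          rw [zero_sub] at this
          exact this
        have hev := h2.eventually (eventually_lt_nhds hrM)
        obtain ⟨n, hn⟩ := hev.exists
        obtain ⟨ψ, hψ⟩ := DVaux.approx ν μ (DVphiN_measurable μ ν n) (n : ℝ)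
          (DVphiN_bound μ ν n)
          (ε := M - (Real.log (∫ x, Real.exp (DVphiN μ ν n x) ∂ν)
            - ∫ x, DVphiN μ ν n x ∂μ)) (by linarith)
        refine le_trans (iInf_le _ ψ) (EReal.coe_le_coe_iff.2 (by linarith))
      · rw [if_neg h] at hM
        by_cases hac : μ ≪ ν
        · have hnint : ¬ Integrable
              (fun x => ((μ.rnDeriv ν x).toReal) * Real.log ((μ.rnDeriv ν x).toReal)) ν :=
            fun hi => h ⟨hac, hi⟩
          obtain ⟨n, hn⟩ := DVphiN_unbounded μ ν hac hnint (Real.log 2 - (M - 1))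
          have hval : Real.log (∫ x, Real.exp (DVphiN μ ν n x) ∂ν)
              - ∫ x, DVphiN μ ν n x ∂μ ≤ M - 1 := by
            have := DVphiN_log_le μ ν n
            linarith
          obtain ⟨ψ, hψ⟩ := DVaux.approx ν μ (DVphiN_measurable μ ν n) (n : ℝ)
            (DVphiN_bound μ ν n) (ε := 1) one_pos
          refine le_trans (iInf_le _ ψ) (EReal.coe_le_coe_iff.2 (by linarith))
        · obtain ⟨φ, c, hφm, hφb, hφval⟩ := DV_not_ac μ ν hac (M - 1)
          obtain ⟨ψ, hψ⟩ := DVaux.approx ν μ hφm c hφb (ε := 1) one_pos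
          refine le_trans (iInf_le _ ψ) (EReal.coe_le_coe_iff.2 (by linarith))
    by_contra hlt
    rw [not_le] at hlt
    obtain ⟨M, hM1, hM2⟩ := EReal.exists_between_coe_real hlt
    exact absurd (lt_of_le_of_lt (key M hM1) hM2) (lt_irrefl _)
end

section
/- Let K be a non-empty convex weak-* compact subset of the topological dual of a separable Fréchet space E. Then K is the weak-* closed convex hull of the set of its weak-* exposed points; in particular this set is non-empty. -/
open Classical

/-- A weak-* exposed point of a set `K` in the dual of a complex topological
vector space `E`: some `x ∈ E` has real part attaining its strict maximum over
`K` exactly at `f`. -/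
def IsWeakStarExposed {E : Type*} [AddCommGroup E] [Module ℂ E] [TopologicalSpace E]
    (K : Set (WeakDual ℂ E)) (f : WeakDual ℂ E) : Prop :=
  f ∈ K ∧ ∃ x : E, ∀ g ∈ K, g ≠ f → (g x).re < (f x).re

section SidneyAuxSection

open Filter Topology Set
open scoped Uniformity

set_option linter.unusedSectionVars false

namespace SidneyAux

variable {E : Type*} [AddCommGroup E] [Module ℂ E] [TopologicalSpace E]
  [IsTopologicalAddGroup E] [ContinuousSMul ℂ E]

/-- The face of `K` in direction `x`: the set of elements of `K` whose real part at `x`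
is maximal over `K`. -/
def face (K : Set (WeakDual ℂ E)) (x : E) : Set (WeakDual ℂ E) :=
  {g | g ∈ K ∧ ∀ h ∈ K, (h x).re ≤ (g x).re}

lemma cont_re (x : E) : Continuous fun g : WeakDual ℂ E => (g x).re :=
  Complex.continuous_re.comp (WeakDual.eval_continuous x)

variable {K : Set (WeakDual ℂ E)}

lemma face_subset (x : E) : face K x ⊆ K := fun _ hg => hg.1

lemma face_nonempty (hcomp : IsCompact K) (hK : K.Nonempty) (x : E) :
    (face K x).Nonempty := by
  obtain ⟨g, hgK, hg⟩ := hcomp.exists_isMaxOn hK ((cont_re x).continuousOn)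
  exact ⟨g, hgK, fun h hh => hg hh⟩

lemma re_apply_add_smul (g : WeakDual ℂ E) (x u : E) (c : ℝ) :
    (g (x + c • u)).re = (g x).re + c * (g u).re := by
  rw [map_add, ← Complex.coe_smul, map_smul, smul_eq_mul, Complex.add_re,
    Complex.re_ofReal_mul]

lemma baireE [PolishSpace E] : BaireSpace E := by
  letI := TopologicalSpace.upgradeIsCompletelyMetrizable E
  infer_instance

/-- Banach-Steinhaus: the weak-* compact set `K` is equicontinuous. -/
lemma equi [PolishSpace E] (hcomp : IsCompact K) :
    ∀ ε > 0, ∃ V ∈ 𝓝 (0 : E), ∀ y ∈ V, ∀ g ∈ K, |(g y).re| ≤ ε := by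
  intro ε hε
  haveI : BaireSpace E := baireE
  letI : UniformSpace E := IsTopologicalAddGroup.rightUniformSpace E
  haveI : IsUniformAddGroup E := isUniformAddGroup_of_addCommGroup
  set 𝓕 : K → (E →L[ℂ] ℂ) := fun g => (g.1 : WeakDual ℂ E) with h𝓕
  have hq := norm_withSeminorms ℂ ℂ
  have hbdd : ∀ (k : Fin 1) (x : E),
      BddAbove (range fun i : K => (fun _ : Fin 1 => normSeminorm ℂ ℂ) k ((𝓕 i) x)) := by
    intro k x
    have hc : IsCompact ((fun g : WeakDual ℂ E => ‖g x‖) '' K) :=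
      hcomp.image (continuous_norm.comp (WeakDual.eval_continuous x))
    have := hc.bddAbove
    rwa [Set.image_eq_range] at this
  have hue : UniformEquicontinuous ((↑) ∘ 𝓕) := hq.banach_steinhaus hbdd
  have h0 := hue.equicontinuous 0
  have hU : {p : ℂ × ℂ | dist p.1 p.2 < ε} ∈ 𝓤 ℂ := Metric.dist_mem_uniformity hε
  have hev := h0 _ hU
  refine ⟨_, hev, ?_⟩
  intro y hy g hg
  have h2 : dist ((𝓕 ⟨g, hg⟩) 0) ((𝓕 ⟨g, hg⟩) y) < ε := hy ⟨g, hg⟩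
  rw [map_zero, dist_zero_left] at h2
  calc |(g y).re| ≤ ‖g y‖ := Complex.abs_re_le_norm (g y)
    _ ≤ ε := le_of_lt h2

/-- Upper semicontinuity near the zero set of `ψ` over the compact `K`. -/
lemma usc (hcomp : IsCompact K)
    {φ ψ : WeakDual ℂ E → ℝ} (hφ : Continuous φ) (hψ : Continuous ψ)
    (hψ0 : ∀ g ∈ K, 0 ≤ ψ g) {s : ℝ} (hs : ∀ g ∈ K, ψ g = 0 → φ g ≤ s)
    {σ : ℝ} (hσ : 0 < σ) : ∃ t > 0, ∀ g ∈ K, ψ g ≤ t → φ g ≤ s + σ := by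
  by_contra hcon
  push_neg at hcon
  set C : ℕ → Set (WeakDual ℂ E) :=
    fun n => {g | g ∈ K ∧ ψ g ≤ 1 / (n + 1) ∧ s + σ ≤ φ g} with hC
  have hCsub : ∀ n, C (n + 1) ⊆ C n := by
    intro n g hg
    refine ⟨hg.1, hg.2.1.trans ?_, hg.2.2⟩
    apply one_div_le_one_div_of_le <;> push_cast <;> linarith
  have hne : ∀ n, (C n).Nonempty := by
    intro n
    obtain ⟨g, hgK, h1, h2⟩ := hcon (1 / (n + 1)) (by positivity)
    exact ⟨g, hgK, h1, h2.le⟩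
  have hclosed : ∀ n, IsClosed (C n) := by
    intro n
    have : C n = K ∩ ({g | ψ g ≤ 1 / (n + 1)} ∩ {g | s + σ ≤ φ g}) := by
      ext g; simp [hC, and_assoc, Set.mem_inter_iff]; tauto
    rw [this]
    exact hcomp.isClosed.inter ((isClosed_le hψ continuous_const).inter
      (isClosed_le continuous_const hφ))
  have hcpt : IsCompact (C 0) := hcomp.of_isClosed_subset (hclosed 0) fun g hg => hg.1
  obtain ⟨g, hg⟩ := IsCompact.nonempty_iInter_of_sequence_nonempty_isCompact_isClosed
    C hCsub hne hcpt hclosed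
  simp only [mem_iInter] at hg
  have hgK : g ∈ K := (hg 0).1
  have hψg : ψ g ≤ 0 := by
    refine ge_of_tendsto' tendsto_one_div_add_atTop_nhds_zero_nat fun n => ?_
    exact (hg n).2.1
  have : ψ g = 0 := le_antisymm hψg (hψ0 g hgK)
  have := hs g hgK this
  have := (hg 0).2.2
  linarith

/-- Density of the set of directions whose face has small oscillation at `u`. -/
lemma dense_u (hcomp : IsCompact K) (hK : K.Nonempty) (u : E) {σ : ℝ} (hσ : 0 < σ) :
    Dense {x : E | ∀ g ∈ face K x, ∀ h ∈ face K x, |(g u).re - (h u).re| < σ} := by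
  rw [dense_iff_inter_open]
  rintro U hU ⟨x₀, hx₀⟩
  -- maximizer of `Re (· u)` on the face of `x₀`
  obtain ⟨hstar, hstarF, hstarmax⟩ :=
    (hcomp.of_isClosed_subset (by
      have : face K x₀ = K ∩ ⋂ h ∈ K, {g : WeakDual ℂ E | (h x₀).re ≤ (g x₀).re} := by
        ext g; simp [face, mem_iInter]
      rw [this]
      exact hcomp.isClosed.inter <| isClosed_biInter fun h _ =>
        isClosed_le continuous_const (cont_re x₀)) (face_subset x₀)).exists_isMaxOn
      (face_nonempty hcomp hK x₀) ((cont_re u).continuousOn)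
  -- maximizer of `Re (· u)` on all of `K`
  obtain ⟨gβ, hgβK, hgβmax⟩ := hcomp.exists_isMaxOn hK ((cont_re u).continuousOn)
  set s : ℝ := (hstar u).re with hs_def
  set β : ℝ := (gβ u).re - s with hβ_def
  have hβ0 : 0 ≤ β := sub_nonneg.2 (hgβmax hstarF.1)
  -- upper semicontinuity bound
  obtain ⟨t, ht, htbound⟩ := usc hcomp (φ := fun g => (g u).re)
    (ψ := fun g => (hstar x₀).re - (g x₀).re) (cont_re u)
    (continuous_const.sub (cont_re x₀))
    (fun g hg => sub_nonneg.2 (hstarF.2 g hg))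
    (s := s)
    (fun g hg hg0 => by
      have hgF : g ∈ face K x₀ := ⟨hg, fun h hh => by
        have := hstarF.2 h hh; linarith [sub_eq_zero.1 hg0]⟩
      exact hstarmax hgF)
    (half_pos hσ)
  -- choose a small positive `c`
  have hev1 : ∀ᶠ c : ℝ in 𝓝 0, x₀ + c • u ∈ U := by
    have hcont : Tendsto (fun c : ℝ => x₀ + c • u) (𝓝 0) (𝓝 x₀) := by
      have : Continuous fun c : ℝ => x₀ + c • u := by
        simp only [← Complex.coe_smul]
        exact continuous_const.add ((Complex.continuous_ofReal).smul continuous_const)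
      have h0 : x₀ + (0 : ℝ) • u = x₀ := by simp
      simpa [h0] using this.tendsto 0
    exact hcont.eventually (hU.eventually_mem hx₀)
  have hev2 : ∀ᶠ c : ℝ in 𝓝 0, c * β < t := by
    have hcont : Tendsto (fun c : ℝ => c * β) (𝓝 0) (𝓝 0) := by
      simpa using (continuous_mul_right β).tendsto 0
    exact hcont.eventually (eventually_lt_nhds ht)
  have hev3 : ∀ᶠ c : ℝ in 𝓝[>] (0 : ℝ), (0 : ℝ) < c := eventually_mem_nhdsWithin
  obtain ⟨c, ⟨hcU, hct⟩, hcpos⟩ :=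
    (((hev1.and hev2).filter_mono nhdsWithin_le_nhds).and hev3).exists
  refine ⟨x₀ + c • u, hcU, ?_⟩
  -- every member of the new face has `Re (· u)` in `[s, s + σ/2]`
  have key : ∀ g ∈ face K (x₀ + c • u), s ≤ (g u).re ∧ (g u).re ≤ s + σ / 2 := by
    intro g hg
    have hgK : g ∈ K := hg.1
    have h1 : (hstar (x₀ + c • u)).re ≤ (g (x₀ + c • u)).re := hg.2 hstar hstarF.1
    rw [re_apply_add_smul, re_apply_add_smul] at h1
    have h2 : (g x₀).re ≤ (hstar x₀).re := hstarF.2 g hgK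
    have hsle : s ≤ (g u).re := by
      have : c * s ≤ c * (g u).re := by linarith
      exact le_of_mul_le_mul_left this hcpos
    refine ⟨hsle, ?_⟩
    have hψle : (hstar x₀).re - (g x₀).re ≤ c * ((g u).re - s) := by linarith
    have hle2 : c * ((g u).re - s) ≤ c * β := by
      have : (g u).re ≤ (gβ u).re := hgβmax hgK
      have := mul_le_mul_of_nonneg_left (by linarith : (g u).re - s ≤ β) hcpos.le
      linarith
    exact htbound g hgK (by linarith)
  intro g hg h hh
  obtain ⟨h1, h2⟩ := key g hg
  obtain ⟨h3, h4⟩ := key h hh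
  rw [abs_sub_lt_iff]
  constructor <;> linarith

/-- A cluster point of elements of faces along a convergent sequence of directions
belongs to the face of the limit. -/
lemma cluster_face [PolishSpace E] (hcomp : IsCompact K)
    {xs : ℕ → E} {x : E} (hlim : Tendsto xs atTop (𝓝 x))
    {gs : ℕ → WeakDual ℂ E} (hgs : ∀ n, gs n ∈ face K (xs n))
    {g₀ : WeakDual ℂ E} (hg₀K : g₀ ∈ K) (hclus : MapClusterPt g₀ atTop gs) :
    g₀ ∈ face K x := by
  refine ⟨hg₀K, fun h' hh' => ?_⟩
  by_contra hlt
  push_neg at hlt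
  set ε : ℝ := ((h' x).re - (g₀ x).re) / 3 with hε
  have hεpos : 0 < ε := by simp only [hε]; linarith
  obtain ⟨V, hV, hVb⟩ := equi hcomp ε hεpos
  -- eventually `xs n - x ∈ V`
  have hev1 : ∀ᶠ n in atTop, xs n - x ∈ V := by
    have ht : Tendsto (fun n => xs n - x) atTop (𝓝 0) := by
      simpa using hlim.sub (tendsto_const_nhds (x := x))
    exact ht.eventually_mem hV
  -- eventually `Re h' (xs n)` is close to `Re h' x`
  have hev2 : ∀ᶠ n in atTop, (h' x).re - ε ≤ (h' (xs n)).re := by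
    have hcont : Tendsto (fun n => (h' (xs n)).re) atTop (𝓝 ((h' x).re)) :=
      ((Complex.continuous_re.comp (map_continuous h')).continuousAt).tendsto.comp hlim
    exact hcont.eventually (eventually_ge_nhds (by linarith))
  -- eventually `Re (gs n) x` is large
  have hev : ∀ᶠ n in atTop, (g₀ x).re + ε ≤ (gs n x).re := by
    filter_upwards [hev1, hev2] with n h1 h2
    have hmax : (h' (xs n)).re ≤ (gs n (xs n)).re := (hgs n).2 h' hh'
    have hsplit : (gs n (xs n)).re = (gs n x).re + (gs n (xs n - x)).re := by
      have : gs n (xs n) = gs n x + gs n (xs n - x) := by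
        rw [← map_add]; congr 1; abel
      rw [this, Complex.add_re]
    have hsmall : |(gs n (xs n - x)).re| ≤ ε := hVb _ h1 _ (hgs n).1
    have habs := abs_le.1 hsmall
    have : (g₀ x).re = (h' x).re - 3 * ε := by simp only [hε]; ring
    linarith
  -- frequently `Re (gs n) x` is small
  have hfreq : ∃ᶠ n in atTop, (gs n x).re < (g₀ x).re + ε := by
    have hmc := hclus.continuousAt_comp (f := fun g : WeakDual ℂ E => (g x).re)
      (cont_re x).continuousAt
    exact (mapClusterPt_iff_frequently.1 hmc) (Iio ((g₀ x).re + ε)) (Iio_mem_nhds (by linarith))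
  obtain ⟨n, h1, h2⟩ := (hfreq.and_eventually hev).exists
  linarith

/-- Openness of the set of directions with small face oscillation. -/
lemma open_u [PolishSpace E] (hcomp : IsCompact K) (u : E) {σ : ℝ} (hσ : 0 < σ) :
    IsOpen {x : E | ∀ g ∈ face K x, ∀ h ∈ face K x, |(g u).re - (h u).re| < σ} := by
  haveI : SequentialSpace E := by
    letI := TopologicalSpace.upgradeIsCompletelyMetrizable E
    infer_instance
  rw [← isClosed_compl_iff]
  apply IsSeqClosed.isClosed
  intro xs x hmem hlim
  simp only [mem_compl_iff, mem_setOf_eq, not_forall] at hmem ⊢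
  have hmem' : ∀ n, ∃ g, g ∈ face K (xs n) ∧ ∃ h, h ∈ face K (xs n) ∧
      σ ≤ |(g u).re - (h u).re| := by
    intro n
    obtain ⟨g, hg, h, hh, hns⟩ := hmem n
    exact ⟨g, hg, h, hh, not_lt.1 hns⟩
  choose g hgF h hh' using hmem'
  choose hhF hsep using hh'
  -- cluster point of the pair sequence in K ×ˢ K
  have hKK : IsCompact (K ×ˢ K) := hcomp.prod hcomp
  have hle : Filter.map (fun n => (g n, h n)) atTop ≤ 𝓟 (K ×ˢ K) := by
    rw [le_principal_iff, Filter.mem_map]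
    exact Filter.univ_mem' fun n => ⟨(hgF n).1, (hhF n).1⟩
  obtain ⟨p, hpK, hclus⟩ := hKK.exists_mapClusterPt hle
  have hg₀ : MapClusterPt p.1 atTop g := hclus.continuousAt_comp continuous_fst.continuousAt
  have hh₀ : MapClusterPt p.2 atTop h := hclus.continuousAt_comp continuous_snd.continuousAt
  have hgface : p.1 ∈ face K x := cluster_face hcomp hlim hgF hpK.1 hg₀
  have hhface : p.2 ∈ face K x := cluster_face hcomp hlim hhF hpK.2 hh₀
  refine ⟨p.1, hgface, p.2, hhface, not_lt.2 ?_⟩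
  -- σ ≤ |Re p.1 u - Re p.2 u|
  have hcont : Continuous fun r : WeakDual ℂ E × WeakDual ℂ E =>
      |(r.1 u).re - (r.2 u).re| :=
    (((cont_re u).comp continuous_fst).sub ((cont_re u).comp continuous_snd)).abs
  have hq := hclus.continuousAt_comp
    (f := fun r : WeakDual ℂ E × WeakDual ℂ E => |(r.1 u).re - (r.2 u).re|)
    hcont.continuousAt
  by_contra hcon
  push_neg at hcon
  have := (mapClusterPt_iff_frequently.1 hq) (Iio σ) (Iio_mem_nhds hcon)
  obtain ⟨n, hn⟩ := this.exists
  exact absurd hn (not_lt.2 (hsep n))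

/-- Two functionals agreeing in real part on a dense set of points are equal. -/
lemma eq_of_re_eq_dense {g h : WeakDual ℂ E} {s : Set E} (hs : Dense s)
    (heq : ∀ y ∈ s, (g y).re = (h y).re) : g = h := by
  have hre : (fun y : E => (g y).re) = fun y : E => (h y).re := by
    apply Continuous.ext_on hs
    · exact Complex.continuous_re.comp (map_continuous g)
    · exact Complex.continuous_re.comp (map_continuous h)
    · exact heq
  have hre' : ∀ y : E, (g y).re = (h y).re := fun y => congrFun hre y
  apply DFunLike.ext
  intro y
  apply Complex.ext
  · exact hre' y
  · have h1 : g (Complex.I • y) = Complex.I * g y := by rw [map_smul, smul_eq_mul]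
    have h2 : h (Complex.I • y) = Complex.I * h y := by rw [map_smul, smul_eq_mul]
    have := hre' (Complex.I • y)
    rw [h1, h2] at this
    simpa [Complex.mul_re] using this

/-- Baire category: a dense set of directions has singleton faces. -/
lemma dense_singleton [PolishSpace E] (hcomp : IsCompact K) (hK : K.Nonempty) :
    Dense {x : E | ∀ g ∈ face K x, ∀ h ∈ face K x, g = h} := by
  haveI : BaireSpace E := baireE
  haveI : Nonempty E := ⟨0⟩
  set e : ℕ → E := TopologicalSpace.denseSeq E with he
  set D : ℕ × ℕ → Set E := fun nk =>
    {x : E | ∀ g ∈ face K x, ∀ h ∈ face K x,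
      |(g (e nk.1)).re - (h (e nk.1)).re| < 1 / (nk.2 + 1)} with hD
  have hDdense : Dense (⋂ nk, D nk) := by
    apply dense_iInter_of_isOpen
    · intro nk
      exact open_u hcomp (e nk.1) (by positivity)
    · intro nk
      exact dense_u hcomp hK (e nk.1) (by positivity)
  apply hDdense.mono
  intro x hx g hg h hh
  simp only [mem_iInter] at hx
  apply eq_of_re_eq_dense (TopologicalSpace.denseRange_denseSeq E)
  rintro y ⟨n, rfl⟩
  have hle : ∀ k : ℕ, |(g (e n)).re - (h (e n)).re| ≤ 1 / (k + 1) :=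
    fun k => (hx (n, k) g hg h hh).le
  have h0 : |(g (e n)).re - (h (e n)).re| ≤ 0 :=
    ge_of_tendsto' tendsto_one_div_add_atTop_nhds_zero_nat hle
  have h1 := abs_nonneg ((g (e n)).re - (h (e n)).re)
  have h2 : |(g (e n)).re - (h (e n)).re| = 0 := le_antisymm h0 h1
  have := abs_eq_zero.1 h2
  linarith [sub_eq_zero.1 this]

/-- From a direction with singleton face, get an exposed point. -/
lemma exposed_of (hcomp : IsCompact K) (hK : K.Nonempty) (x : E)
    (hx : ∀ g ∈ face K x, ∀ h ∈ face K x, g = h) :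
    ∃ f, IsWeakStarExposed K f ∧ f ∈ face K x := by
  obtain ⟨f, hf⟩ := face_nonempty hcomp hK x
  refine ⟨f, ⟨hf.1, x, fun g hg hne => ?_⟩, hf⟩
  rcases lt_or_eq_of_le (hf.2 g hg) with h | h
  · exact h
  · exfalso
    apply hne
    exact hx g ⟨hg, fun h' hh' => h ▸ hf.2 h' hh'⟩ f hf

/-- Separation of a point from a compact convex set in the weak-* dual,
by the real part of an evaluation. -/
lemma sep {C : Set (WeakDual ℂ E)} (hCconv : Convex ℝ C) (hCcomp : IsCompact C)
    {f0 : WeakDual ℂ E} (hf0 : f0 ∉ C) :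
    ∃ (y : E) (α : ℝ), (∀ h ∈ C, (h y).re < α) ∧ α < (f0 y).re := by
  have hdiff : ∀ g : C, ∃ x : E, (g : WeakDual ℂ E) x ≠ f0 x := by
    rintro ⟨g, hg⟩
    by_contra hcon
    push_neg at hcon
    have : g = f0 := DFunLike.ext _ _ hcon
    exact hf0 (this ▸ hg)
  choose ξ hξ using hdiff
  set O : C → Set (WeakDual ℂ E) := fun g => {h | h (ξ g) ≠ f0 (ξ g)} with hO
  have hOopen : ∀ g : C, IsOpen (O g) := by
    intro g
    have : O g = (fun h : WeakDual ℂ E => h (ξ g)) ⁻¹' {f0 (ξ g)}ᶜ := rfl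
    rw [this]
    exact (isOpen_compl_singleton).preimage (WeakDual.eval_continuous _)
  have hcover : C ⊆ ⋃ g : C, O g := fun g hg =>
    mem_iUnion.2 ⟨⟨g, hg⟩, hξ ⟨g, hg⟩⟩
  obtain ⟨s, hs⟩ := hCcomp.elim_finite_subcover O hOopen hcover
  set T : WeakDual ℂ E → (s → ℂ) := fun h i => h (ξ i.1) with hT
  have hTcont : Continuous T := continuous_pi fun i => WeakDual.eval_continuous _
  set Tlin : WeakDual ℂ E →ₗ[ℝ] (s → ℂ) :=
    { toFun := T
      map_add' := fun a b => rfl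
      map_smul' := fun r a => rfl } with hTlin
  have hTC_conv : Convex ℝ (T '' C) := by
    rintro _ ⟨a, ha, rfl⟩ _ ⟨b, hb, rfl⟩ r q hr hq hrq
    exact ⟨r • a + q • b, hCconv ha hb hr hq hrq, rfl⟩
  have hTC_closed : IsClosed (T '' C) := (hCcomp.image hTcont).isClosed
  have hTf0 : T f0 ∉ T '' C := by
    rintro ⟨h, hhC, hTh⟩
    obtain ⟨g, hgs, hgO⟩ := mem_iUnion₂.1 (hs hhC)
    exact hgO (congrFun hTh ⟨g, hgs⟩)
  obtain ⟨ℓ, α, hlt, hgt⟩ := geometric_hahn_banach_closed_point hTC_conv hTC_closed hTf0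
  set y : E := ∑ i : s, ((ℓ (Pi.single i 1) : ℂ) -
      Complex.I * (ℓ (Pi.single i Complex.I) : ℂ)) • ξ i.1 with hy
  have hkey : ∀ h : WeakDual ℂ E, (h y).re = ℓ (T h) := by
    intro h
    have h1 : h y = ∑ i : s, ((ℓ (Pi.single i 1) : ℂ) -
        Complex.I * (ℓ (Pi.single i Complex.I) : ℂ)) * h (ξ i.1) := by
      rw [hy, map_sum]
      congr 1
      funext i
      rw [map_smul, smul_eq_mul]
    have h2 : T h = ∑ i : s, Pi.single i (T h i) := by
      rw [Finset.univ_sum_single (T h)]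
    have h3 : ∀ i : s, (Pi.single i (T h i) : s → ℂ) =
        (T h i).re • (Pi.single i (1 : ℂ) : s → ℂ)
          + (T h i).im • (Pi.single i Complex.I : s → ℂ) := by
      intro i
      funext j
      by_cases hji : j = i
      · subst hji
        simp only [Pi.single_eq_same, Pi.add_apply, Pi.smul_apply, Complex.real_smul]
        apply Complex.ext <;> simp
      · simp [Pi.single_apply, hji]
    have h4 : ℓ (T h) = ∑ i : s,
        ((T h i).re * ℓ (Pi.single i 1) + (T h i).im * ℓ (Pi.single i Complex.I)) := by
      conv_lhs => rw [h2]
      rw [map_sum]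
      congr 1
      funext i
      rw [h3 i, map_add, map_smul, map_smul, smul_eq_mul, smul_eq_mul]
    rw [h1, h4, Complex.re_sum]
    congr 1
    funext i
    have hre : ∀ (a b : ℝ) (w : ℂ), (((a : ℂ) - Complex.I * (b : ℂ)) * w).re
        = a * w.re + b * w.im := by
      intro a b w
      simp only [Complex.sub_re, Complex.mul_re, Complex.mul_im, Complex.ofReal_re,
        Complex.ofReal_im, Complex.I_re, Complex.I_im, Complex.sub_im]
      ring
    rw [hre]
    have : T h i = h (ξ i.1) := rfl
    rw [← this]
    ring
  refine ⟨y, α, fun h hh => ?_, ?_⟩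
  · rw [hkey h]
    exact hlt _ ⟨h, hh, rfl⟩
  · rw [hkey f0]
    exact hgt

end SidneyAux

end SidneyAuxSection

/-- Sidney/Bishop: a nonempty convex weak-* compact subset of the
dual of a separable Fréchet space is the weak-* closed convex hull of its
weak-* exposed points; in particular that set is nonempty. -/
theorem weakStarExposed_dense
    {E : Type*} [AddCommGroup E] [Module ℂ E] [TopologicalSpace E]
    [IsTopologicalAddGroup E] [ContinuousSMul ℂ E]
    [LocallyConvexSpace ℝ E] [PolishSpace E]
    (K : Set (WeakDual ℂ E)) (hK : K.Nonempty) (hconv : Convex ℝ K)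
    (hcomp : IsCompact K) :
    K = closure (convexHull ℝ {f | IsWeakStarExposed K f}) ∧
      {f | IsWeakStarExposed K f}.Nonempty := by
  have hdense := SidneyAux.dense_singleton hcomp hK
  haveI : Nonempty E := ⟨0⟩
  obtain ⟨x₀, hx₀⟩ := hdense.nonempty
  obtain ⟨f₁, hf₁, _⟩ := SidneyAux.exposed_of hcomp hK x₀ hx₀
  have hne : {f | IsWeakStarExposed K f}.Nonempty := ⟨f₁, hf₁⟩
  have hExpK : {f | IsWeakStarExposed K f} ⊆ K := fun f hf => hf.1
  have hCK : closure (convexHull ℝ {f | IsWeakStarExposed K f}) ⊆ K := by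
    have h1 : convexHull ℝ {f | IsWeakStarExposed K f} ⊆ K := convexHull_min hExpK hconv
    have h2 := closure_mono h1
    rwa [hcomp.isClosed.closure_eq] at h2
  refine ⟨Set.Subset.antisymm ?_ hCK, hne⟩
  intro f0 hf0K
  by_contra hf0
  have hCconv : Convex ℝ (closure (convexHull ℝ {f | IsWeakStarExposed K f})) :=
    (convex_convexHull ℝ _).closure
  have hCcomp : IsCompact (closure (convexHull ℝ {f | IsWeakStarExposed K f})) :=
    hcomp.of_isClosed_subset isClosed_closure hCK
  obtain ⟨y, α, hlt, hgt⟩ := SidneyAux.sep hCconv hCcomp hf0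
  set ε : ℝ := ((f0 y).re - α) / 3 with hε
  have hεpos : 0 < ε := by simp only [hε]; linarith
  obtain ⟨V, hV, hVb⟩ := SidneyAux.equi hcomp ε hεpos
  have hN : (fun x : E => x - y) ⁻¹' V ∈ nhds y := by
    apply ContinuousAt.preimage_mem_nhds
    · exact (continuous_id.sub continuous_const).continuousAt
    · simpa using hV
  obtain ⟨x₁, hx₁N, hx₁D⟩ := mem_closure_iff_nhds.1 (hdense y) _ hN
  obtain ⟨f, hfExp, hfFace⟩ := SidneyAux.exposed_of hcomp hK x₁ hx₁D
  have hsmall : ∀ g ∈ K, |(g (x₁ - y)).re| ≤ ε := fun g hg => hVb _ hx₁N g hg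
  have habs1 := abs_le.1 (hsmall f hfExp.1)
  have habs2 := abs_le.1 (hsmall f0 hf0K)
  have hffmax : (f0 x₁).re ≤ (f x₁).re := hfFace.2 f0 hf0K
  have hfy : f x₁ = f y + f (x₁ - y) := by rw [← map_add]; congr 1; abel
  have hf0y : f0 x₁ = f0 y + f0 (x₁ - y) := by rw [← map_add]; congr 1; abel
  have hfC : f ∈ closure (convexHull ℝ {f | IsWeakStarExposed K f}) :=
    subset_closure (subset_convexHull ℝ _ hfExp)
  have hflt := hlt f hfC
  have e1 : (f x₁).re = (f y).re + (f (x₁ - y)).re := by rw [hfy, Complex.add_re]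
  have e2 : (f0 x₁).re = (f0 y).re + (f0 (x₁ - y)).re := by rw [hf0y, Complex.add_re]
  linarith
end

section
/- Let μ, ν be probability measures on a measurable space, G a compact group with Haar probability measure acting measurably, with ν invariant under the averaging operation (ν_G = ν where ν_G is the Haar average of g_*ν). Then Ent(μ|ν) = Ent(μ|μ_G) + Ent(μ_G|ν), where μ_G denotes the Haar average of the measures g_*μ. -/
open MeasureTheory Real

/-- Relative entropy `-∫ (dμ/dν) log (dμ/dν) dν` as a real number (assuming
absolute continuity and integrability, which are hypothesized separately). -/
noncomputable def entRel {α : Type*} [MeasurableSpace α] (μ ν : Measure α) : ℝ :=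
  -∫ x, ((μ.rnDeriv ν x).toReal) * Real.log ((μ.rnDeriv ν x).toReal) ∂ν

/-- chain rule for relative entropy through group averaging:
if `ν` is invariant under Haar averaging then
`Ent(μ|ν) = Ent(μ|μ_G) + Ent(μ_G|ν)`. -/
theorem relative_entropy_group_average_chain_rule
    {α : Type*} [MeasurableSpace α]
    {G : Type*} [Group G] [TopologicalSpace G] [IsTopologicalGroup G]
    [CompactSpace G] [MeasurableSpace G] [BorelSpace G]
    (h : Measure G) [h.IsHaarMeasure] [IsProbabilityMeasure h]
    [MulAction G α]
    (hmeas : Measurable (fun p : G × α => p.1 • p.2))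
    (μ ν : Measure α) [IsProbabilityMeasure μ] [IsProbabilityMeasure ν]
    (μG : Measure α)
    (hμG : μG = (h.prod μ).map (fun p : G × α => p.1 • p.2))
    (hinv : ν = (h.prod ν).map (fun p : G × α => p.1 • p.2))
    (hac : μ ≪ ν) (hacμG : μ ≪ μG) (hacGν : μG ≪ ν)
    (hint : Integrable
      (fun x => ((μ.rnDeriv ν x).toReal) * Real.log ((μ.rnDeriv ν x).toReal)) ν)
    (hint1 : Integrable
      (fun x => ((μ.rnDeriv μG x).toReal) * Real.log ((μ.rnDeriv μG x).toReal)) μG)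
    (hint2 : Integrable
      (fun x => ((μG.rnDeriv ν x).toReal) * Real.log ((μG.rnDeriv ν x).toReal)) ν) :
    entRel μ ν = entRel μ μG + entRel μG ν := by
  classical
  haveI : MeasurableSMul G α :=
    { measurable_const_smul := fun c => hmeas.comp (measurable_const.prodMk measurable_id),
      measurable_smul_const := fun x => hmeas.comp (measurable_id.prodMk measurable_const) }
  haveI : IsProbabilityMeasure μG :=
    hμG ▸ Measure.isProbabilityMeasure_map hmeas.aemeasurable
  set act : G × α → α := fun p => p.1 • p.2 with hact
  -- invariance of pushforwards of averaged measures under each `g`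
  have key : ∀ (ρ : Measure α) [IsProbabilityMeasure ρ] (g : G),
      ((h.prod ρ).map act).map (g • ·) = (h.prod ρ).map act := by
    intro ρ _ g
    rw [Measure.map_map (measurable_const_smul g) hmeas]
    have hcomp : (g • ·) ∘ act = act ∘ (Prod.map (g * ·) id) := by
      funext p
      simp [act, Prod.map, mul_smul]
    rw [hcomp, ← Measure.map_map hmeas ((by fun_prop : Measurable (g * · : G → G)) |>.prodMap measurable_id),
      ← Measure.map_prod_map _ _ (by fun_prop : Measurable (g * · : G → G)) measurable_id,
      Measure.map_id, map_mul_left_eq_self h g]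
  have hνg : ∀ g : G, ν.map (g • ·) = ν := by
    intro g; conv_lhs => rw [hinv]
    rw [key ν g, ← hinv]
  have hμGg : ∀ g : G, μG.map (g • ·) = μG := by
    intro g; conv_lhs => rw [hμG]
    rw [key μ g, ← hμG]
  set f : α → ENNReal := μG.rnDeriv ν with hf
  have hfmeas : Measurable f := Measure.measurable_rnDeriv _ _
  -- per-g invariance of the density f
  have hfinv : ∀ g : G, (fun x => f (g • x)) =ᵐ[ν] f := by
    intro g
    have := (measurableEmbedding_const_smul g (α := α)).rnDeriv_map μG ν
    rwa [hμGg g, hνg g] at this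
  -- a.e. invariance on the product
  have hprod : ∀ᵐ p ∂(h.prod μ), f (p.1 • p.2) = f p.2 := by
    rw [MeasureTheory.Measure.ae_prod_iff_ae_ae]
    · exact Filter.Eventually.of_forall fun g => hac.ae_le (hfinv g)
    · exact measurableSet_eq_fun (hfmeas.comp hmeas) (hfmeas.comp measurable_snd)
  set L : α → ℝ := fun x => Real.log (f x).toReal with hL
  have hLmeas : Measurable L := (hfmeas.ennreal_toReal).log
  -- the group averaging step: ∫ L dμG = ∫ L dμ
  have hgroup : ∫ x, L x ∂μG = ∫ x, L x ∂μ := by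
    rw [hμG, integral_map hmeas.aemeasurable hLmeas.aestronglyMeasurable]
    have : ∫ p, L (act p) ∂(h.prod μ) = ∫ p, L p.2 ∂(h.prod μ) := by
      refine integral_congr_ae ?_
      filter_upwards [hprod] with p hp
      simp [L, act, hp]
    rw [this]
    have h2 : ∫ p : G × α, L p.2 ∂(h.prod μ) = ∫ x, L x ∂((h.prod μ).map Prod.snd) :=
      (integral_map measurable_snd.aemeasurable hLmeas.aestronglyMeasurable).symm
    rw [h2, Measure.map_snd_prod, measure_univ, one_smul]
  -- rewrite entRel via change of measure
  have hent : ∀ (ρ σ : Measure α) [IsProbabilityMeasure ρ] [IsProbabilityMeasure σ],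
      ρ ≪ σ → entRel ρ σ = -∫ x, Real.log ((ρ.rnDeriv σ x).toReal) ∂ρ := by
    intro ρ σ _ _ hρσ
    unfold entRel
    congr 1
    have := MeasureTheory.integral_rnDeriv_smul (μ := ρ) (ν := σ) hρσ
      (f := fun x => Real.log ((ρ.rnDeriv σ x).toReal))
    simpa [smul_eq_mul] using this
  -- chain rule for densities, μ-a.e.
  have hchain : ∀ᵐ x ∂μ, Real.log ((μ.rnDeriv ν x).toReal)
      = Real.log ((μ.rnDeriv μG x).toReal) + Real.log ((μG.rnDeriv ν x).toReal) := by
    have h1 : ∀ᵐ x ∂μ, μ.rnDeriv μG x * μG.rnDeriv ν x = μ.rnDeriv ν x :=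
      hac.ae_le (Measure.rnDeriv_mul_rnDeriv hacμG)
    have h2 : ∀ᵐ x ∂μ, 0 < μ.rnDeriv μG x := Measure.rnDeriv_pos hacμG
    have h3 : ∀ᵐ x ∂μ, μ.rnDeriv μG x < ⊤ := hacμG.ae_le (Measure.rnDeriv_lt_top μ μG)
    have h4 : ∀ᵐ x ∂μ, 0 < μG.rnDeriv ν x := hacμG.ae_le (Measure.rnDeriv_pos hacGν)
    have h5 : ∀ᵐ x ∂μ, μG.rnDeriv ν x < ⊤ := hac.ae_le (Measure.rnDeriv_lt_top μG ν)
    filter_upwards [h1, h2, h3, h4, h5] with x h1 h2 h3 h4 h5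
    rw [← h1, ENNReal.toReal_mul, Real.log_mul]
    · exact (ENNReal.toReal_pos h2.ne' h3.ne).ne'
    · exact (ENNReal.toReal_pos h4.ne' h5.ne).ne'
  -- integrabilities w.r.t. μ
  have I0 : Integrable (fun x => Real.log ((μ.rnDeriv ν x).toReal)) μ := by
    rw [← MeasureTheory.integrable_rnDeriv_smul_iff hac]
    simpa [smul_eq_mul] using hint
  have I1 : Integrable (fun x => Real.log ((μ.rnDeriv μG x).toReal)) μ := by
    rw [← MeasureTheory.integrable_rnDeriv_smul_iff hacμG]
    simpa [smul_eq_mul] using hint1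
  have I2 : Integrable (fun x => Real.log ((μG.rnDeriv ν x).toReal)) μ := by
    refine ((I0.sub I1).congr ?_)
    filter_upwards [hchain] with x hx
    simp only [Pi.sub_apply]
    rw [hx]; ring
  -- put everything together
  rw [hent μ ν hac, hent μ μG hacμG, hent μG ν hacGν]
  have hsplit : ∫ x, Real.log ((μ.rnDeriv ν x).toReal) ∂μ
      = ∫ x, Real.log ((μ.rnDeriv μG x).toReal) ∂μ
        + ∫ x, Real.log ((μG.rnDeriv ν x).toReal) ∂μ := by
    rw [← integral_add I1 I2]
    exact integral_congr_ae hchain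
  have : ∫ x, Real.log ((μG.rnDeriv ν x).toReal) ∂μG
      = ∫ x, Real.log ((μG.rnDeriv ν x).toReal) ∂μ := hgroup
  rw [hsplit, this]
  ring
end

section
/- Relative entropy to a product measure is subadditive over marginals: for probability measures μ on X₁ × X₂ and ν₁ on X₁, ν₂ on X₂, one has Ent(μ | ν₁ ⊗ ν₂) ≤ Ent(q₁μ | ν₁) + Ent(q₂μ | ν₂), where q_iμ are the marginals of μ. -/
open MeasureTheory Real
open scoped ENNReal

lemma klNonneg {α : Type*} [MeasurableSpace α] (μ ρ : Measure α)
    [IsProbabilityMeasure μ] [IsProbabilityMeasure ρ]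
    (hac : μ ≪ ρ) (hint : Integrable (llr μ ρ) μ) : 0 ≤ ∫ x, llr μ ρ x ∂μ := by
  have hpos : ∀ᵐ x ∂μ, 0 < μ.rnDeriv ρ x := Measure.rnDeriv_pos hac
  have hfin : ∀ᵐ x ∂μ, μ.rnDeriv ρ x ≠ ∞ := hac.ae_le (Measure.rnDeriv_ne_top μ ρ)
  have hmeas : Measurable fun x => (μ.rnDeriv ρ x)⁻¹ := (Measure.measurable_rnDeriv μ ρ).inv
  have hl : ∫⁻ x, (μ.rnDeriv ρ x)⁻¹ ∂μ ≤ 1 := by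
    rw [← lintegral_rnDeriv_mul hac hmeas.aemeasurable]
    calc ∫⁻ x, μ.rnDeriv ρ x * (μ.rnDeriv ρ x)⁻¹ ∂ρ ≤ ∫⁻ _, 1 ∂ρ :=
          lintegral_mono fun x => ENNReal.mul_inv_le_one _
      _ = 1 := by simp
  have hintinv : Integrable (fun x => ((μ.rnDeriv ρ x)⁻¹).toReal) μ := by
    refine integrable_toReal_of_lintegral_ne_top hmeas.aemeasurable ?_
    exact (lt_of_le_of_lt hl ENNReal.one_lt_top).ne
  have hreal : ∫ x, ((μ.rnDeriv ρ x)⁻¹).toReal ∂μ ≤ 1 := by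
    rw [integral_toReal hmeas.aemeasurable]
    · calc (∫⁻ x, (μ.rnDeriv ρ x)⁻¹ ∂μ).toReal ≤ (1 : ℝ≥0∞).toReal :=
            ENNReal.toReal_mono (by simp) hl
        _ = 1 := by simp
    · filter_upwards [hpos] with x hx using ENNReal.inv_lt_top.2 hx
  have hptwise : ∀ᵐ x ∂μ, -llr μ ρ x ≤ ((μ.rnDeriv ρ x)⁻¹).toReal - 1 := by
    filter_upwards [hpos, hfin] with x hx hx'
    have h1 : 0 < (μ.rnDeriv ρ x).toReal := ENNReal.toReal_pos hx.ne' hx'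
    have h2 : ((μ.rnDeriv ρ x)⁻¹).toReal = ((μ.rnDeriv ρ x).toReal)⁻¹ := ENNReal.toReal_inv _
    rw [llr, ← Real.log_inv, h2]
    exact Real.log_le_sub_one_of_pos (inv_pos.2 h1)
  have hmono : ∫ x, -llr μ ρ x ∂μ ≤ ∫ x, ((μ.rnDeriv ρ x)⁻¹.toReal - 1) ∂μ :=
    integral_mono_ae hint.neg (hintinv.sub (integrable_const 1)) hptwise
  rw [integral_neg, integral_sub hintinv (integrable_const 1)] at hmono
  simp only [integral_const, measure_univ, probReal_univ, ENNReal.toReal_one, smul_eq_mul, one_mul, mul_one] at hmono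
  linarith

lemma withDensity_prod_eq {X₁ X₂ : Type*} [MeasurableSpace X₁] [MeasurableSpace X₂]
    (ν₁ : Measure X₁) (ν₂ : Measure X₂) [SigmaFinite ν₁] [SigmaFinite ν₂]
    {g₁ : X₁ → ℝ≥0∞} {g₂ : X₂ → ℝ≥0∞} (h₁ : Measurable g₁) (h₂ : Measurable g₂)
    [SigmaFinite (ν₁.withDensity g₁)] [SigmaFinite (ν₂.withDensity g₂)] :
    (ν₁.withDensity g₁).prod (ν₂.withDensity g₂) =
      (ν₁.prod ν₂).withDensity (fun p => g₁ p.1 * g₂ p.2) := by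
  refine Measure.prod_eq fun s t hs ht => ?_
  rw [withDensity_apply _ (hs.prod ht), ← Measure.prod_restrict,
    lintegral_prod_mul h₁.aemeasurable h₂.aemeasurable,
    withDensity_apply _ hs, withDensity_apply _ ht]

/-- relative entropy to a product measure is subadditive over the
marginals: `Ent(μ | ν₁ ⊗ ν₂) ≤ Ent(q₁μ | ν₁) + Ent(q₂μ | ν₂)`. -/
theorem relative_entropy_product_subadditive
    {X₁ X₂ : Type*} [MeasurableSpace X₁] [MeasurableSpace X₂]
    (μ : Measure (X₁ × X₂)) [IsProbabilityMeasure μ]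
    (ν₁ : Measure X₁) (ν₂ : Measure X₂)
    [IsProbabilityMeasure ν₁] [IsProbabilityMeasure ν₂]
    (hac : μ ≪ ν₁.prod ν₂)
    (hint : Integrable (fun x => ((μ.rnDeriv (ν₁.prod ν₂) x).toReal) *
      Real.log ((μ.rnDeriv (ν₁.prod ν₂) x).toReal)) (ν₁.prod ν₂))
    (hintq1 : Integrable (fun x => (((μ.map Prod.fst).rnDeriv ν₁ x).toReal) *
      Real.log (((μ.map Prod.fst).rnDeriv ν₁ x).toReal)) ν₁)
    (hintq2 : Integrable (fun x => (((μ.map Prod.snd).rnDeriv ν₂ x).toReal) *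
      Real.log (((μ.map Prod.snd).rnDeriv ν₂ x).toReal)) ν₂) :
    entRel μ (ν₁.prod ν₂) ≤
      entRel (μ.map Prod.fst) ν₁ + entRel (μ.map Prod.snd) ν₂ := by
  set ν : Measure (X₁ × X₂) := ν₁.prod ν₂ with hν
  set q₁ : Measure X₁ := μ.map Prod.fst with hq₁d
  set q₂ : Measure X₂ := μ.map Prod.snd with hq₂d
  haveI hq₁p : IsProbabilityMeasure q₁ := Measure.isProbabilityMeasure_map measurable_fst.aemeasurable
  haveI hq₂p : IsProbabilityMeasure q₂ := Measure.isProbabilityMeasure_map measurable_snd.aemeasurable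
  have hq1ac : q₁ ≪ ν₁ := by
    have h := hac.map measurable_fst
    simpa [hν, Measure.map_fst_prod] using h
  have hq2ac : q₂ ≪ ν₂ := by
    have h := hac.map measurable_snd
    simpa [hν, Measure.map_snd_prod] using h
  set g₁ := q₁.rnDeriv ν₁ with hg₁d
  set g₂ := q₂.rnDeriv ν₂ with hg₂d
  have hg₁m : Measurable g₁ := Measure.measurable_rnDeriv _ _
  have hg₂m : Measurable g₂ := Measure.measurable_rnDeriv _ _
  set G : X₁ × X₂ → ℝ≥0∞ := fun p => g₁ p.1 * g₂ p.2 with hGd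
  have hGm : Measurable G := (hg₁m.comp measurable_fst).mul (hg₂m.comp measurable_snd)
  haveI : SigmaFinite (ν₁.withDensity g₁) := by
    rw [Measure.withDensity_rnDeriv_eq _ _ hq1ac]; infer_instance
  haveI : SigmaFinite (ν₂.withDensity g₂) := by
    rw [Measure.withDensity_rnDeriv_eq _ _ hq2ac]; infer_instance
  have hprod : q₁.prod q₂ = ν.withDensity G := by
    conv_lhs => rw [← Measure.withDensity_rnDeriv_eq _ _ hq1ac,
      ← Measure.withDensity_rnDeriv_eq _ _ hq2ac]
    exact withDensity_prod_eq ν₁ ν₂ hg₁m hg₂m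
  have hπν : q₁.prod q₂ ≪ ν := by
    rw [hprod]; exact withDensity_absolutelyContinuous ν G
  have hrnπ : (q₁.prod q₂).rnDeriv ν =ᵐ[ν] G := by
    rw [hprod]; exact Measure.rnDeriv_withDensity ν hGm
  -- μ gives no mass to {G = 0}
  have hN1 : μ {p : X₁ × X₂ | g₁ p.1 = 0} = 0 := by
    have hA : MeasurableSet {x : X₁ | g₁ x = 0} := hg₁m (measurableSet_singleton 0)
    have h1 : μ {p : X₁ × X₂ | g₁ p.1 = 0} = q₁ {x | g₁ x = 0} := by
      rw [hq₁d, Measure.map_apply measurable_fst hA]; rfl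
    rw [h1, ← Measure.setLIntegral_rnDeriv hq1ac]
    rw [setLIntegral_congr_fun hA (fun x hx => hx)]
    simp
  have hN2 : μ {p : X₁ × X₂ | g₂ p.2 = 0} = 0 := by
    have hA : MeasurableSet {x : X₂ | g₂ x = 0} := hg₂m (measurableSet_singleton 0)
    have h1 : μ {p : X₁ × X₂ | g₂ p.2 = 0} = q₂ {x | g₂ x = 0} := by
      rw [hq₂d, Measure.map_apply measurable_snd hA]; rfl
    rw [h1, ← Measure.setLIntegral_rnDeriv hq2ac]
    rw [setLIntegral_congr_fun hA (fun x hx => hx)]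
    simp
  have hGzero : μ {p | G p = 0} = 0 :=
    measure_mono_null (t := {p : X₁ × X₂ | g₁ p.1 = 0} ∪ {p | g₂ p.2 = 0})
      (fun p hp => mul_eq_zero.mp hp) (measure_union_null hN1 hN2)
  have hGne : ∀ᵐ p ∂μ, G p ≠ 0 := by
    rw [ae_iff]; simpa using hGzero
  have hμπ : μ ≪ q₁.prod q₂ := by
    refine Measure.AbsolutelyContinuous.mk fun s hs hs0 => ?_
    rw [hprod, withDensity_apply _ hs] at hs0
    have hae : ∀ᵐ p ∂(ν.restrict s), G p = 0 := (lintegral_eq_zero_iff hGm).mp hs0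
    have hae' : ∀ᵐ p ∂ν, p ∈ s → G p = 0 := (ae_restrict_iff' hs).mp hae
    have haeμ : ∀ᵐ p ∂μ, p ∈ s → G p = 0 := hac.ae_le hae'
    rw [measure_eq_zero_iff_ae_notMem]
    filter_upwards [haeμ, hGne] with p h1 h2
    exact fun hp => h2 (h1 hp)
  haveI : IsProbabilityMeasure (q₁.prod q₂) := by infer_instance
  have hchainν : (fun p => μ.rnDeriv (q₁.prod q₂) p * (q₁.prod q₂).rnDeriv ν p)
      =ᵐ[ν] μ.rnDeriv ν := Measure.rnDeriv_mul_rnDeriv hμπ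
  have hhpos : ∀ᵐ p ∂μ, 0 < μ.rnDeriv (q₁.prod q₂) p := Measure.rnDeriv_pos hμπ
  have hhfin : ∀ᵐ p ∂μ, μ.rnDeriv (q₁.prod q₂) p ≠ ∞ := hμπ.ae_le (Measure.rnDeriv_ne_top _ _)
  have hg₁fin : ∀ᵐ p ∂μ, g₁ p.1 ≠ ∞ :=
    ae_of_ae_map measurable_fst.aemeasurable (hq1ac.ae_le (Measure.rnDeriv_ne_top q₁ ν₁))
  have hg₂fin : ∀ᵐ p ∂μ, g₂ p.2 ≠ ∞ :=
    ae_of_ae_map measurable_snd.aemeasurable (hq2ac.ae_le (Measure.rnDeriv_ne_top q₂ ν₂))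
  have hg₁pos : ∀ᵐ p ∂μ, 0 < g₁ p.1 := by
    filter_upwards [hGne] with p hp
    exact pos_iff_ne_zero.2 fun h => hp (by simp [hGd, h])
  have hg₂pos : ∀ᵐ p ∂μ, 0 < g₂ p.2 := by
    filter_upwards [hGne] with p hp
    exact pos_iff_ne_zero.2 fun h => hp (by simp [hGd, h])
  have hdecomp : ∀ᵐ p ∂μ, llr μ ν p =
      llr μ (q₁.prod q₂) p + llr q₁ ν₁ p.1 + llr q₂ ν₂ p.2 := by
    filter_upwards [hac.ae_le hchainν, hac.ae_le hrnπ, hhpos, hhfin, hg₁pos, hg₁fin,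
      hg₂pos, hg₂fin] with p h1 h2 h3 h4 h5 h6 h7 h8
    have hf : μ.rnDeriv ν p = μ.rnDeriv (q₁.prod q₂) p * (g₁ p.1 * g₂ p.2) := by
      rw [← h1, h2]
    have ht : (μ.rnDeriv ν p).toReal =
        (μ.rnDeriv (q₁.prod q₂) p).toReal * ((g₁ p.1).toReal * (g₂ p.2).toReal) := by
      rw [hf, ENNReal.toReal_mul, ENNReal.toReal_mul]
    have e3 : (μ.rnDeriv (q₁.prod q₂) p).toReal ≠ 0 := (ENNReal.toReal_pos h3.ne' h4).ne'
    have e5 : (g₁ p.1).toReal ≠ 0 := (ENNReal.toReal_pos h5.ne' h6).ne'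
    have e7 : (g₂ p.2).toReal ≠ 0 := (ENNReal.toReal_pos h7.ne' h8).ne'
    simp only [llr]
    rw [ht, Real.log_mul e3 (mul_ne_zero e5 e7), Real.log_mul e5 e7]
    ring
  have hIν : Integrable (llr μ ν) μ := by
    rw [← integrable_rnDeriv_smul_iff hac]
    simpa [llr, smul_eq_mul] using hint
  have hIq1 : Integrable (llr q₁ ν₁) q₁ := by
    rw [← integrable_rnDeriv_smul_iff hq1ac]
    simpa [llr, smul_eq_mul] using hintq1
  have hIq2 : Integrable (llr q₂ ν₂) q₂ := by
    rw [← integrable_rnDeriv_smul_iff hq2ac]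
    simpa [llr, smul_eq_mul] using hintq2
  have hI1 : Integrable (fun p : X₁ × X₂ => llr q₁ ν₁ p.1) μ := by
    rw [hq₁d] at hIq1
    exact (integrable_map_measure (stronglyMeasurable_llr _ _).aestronglyMeasurable
      measurable_fst.aemeasurable).mp hIq1
  have hI2 : Integrable (fun p : X₁ × X₂ => llr q₂ ν₂ p.2) μ := by
    rw [hq₂d] at hIq2
    exact (integrable_map_measure (stronglyMeasurable_llr _ _).aestronglyMeasurable
      measurable_snd.aemeasurable).mp hIq2
  have hIπ : Integrable (llr μ (q₁.prod q₂)) μ := by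
    refine ((hIν.sub hI1).sub hI2).congr ?_
    filter_upwards [hdecomp] with p hp
    simp only [Pi.sub_apply]
    linarith
  have hKL : 0 ≤ ∫ p, llr μ (q₁.prod q₂) p ∂μ := klNonneg μ (q₁.prod q₂) hμπ hIπ
  have hIπ1 : Integrable (fun p => llr μ (q₁.prod q₂) p + llr q₁ ν₁ p.1) μ := hIπ.add hI1
  have hsum : ∫ p, llr μ ν p ∂μ = ∫ p, llr μ (q₁.prod q₂) p ∂μ
      + ∫ p, llr q₁ ν₁ p.1 ∂μ + ∫ p, llr q₂ ν₂ p.2 ∂μ := by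
    rw [integral_congr_ae hdecomp, integral_add hIπ1 hI2, integral_add hIπ hI1]
  have hEν : ∫ p, (μ.rnDeriv ν p).toReal * log (μ.rnDeriv ν p).toReal ∂ν
      = ∫ p, llr μ ν p ∂μ := by
    rw [← integral_rnDeriv_smul hac]
    simp_rw [smul_eq_mul, llr]
  have hE1 : ∫ x, (g₁ x).toReal * log (g₁ x).toReal ∂ν₁ = ∫ x, llr q₁ ν₁ x ∂q₁ := by
    rw [← integral_rnDeriv_smul hq1ac]
    simp_rw [smul_eq_mul, llr]
    rfl
  have hE2 : ∫ x, (g₂ x).toReal * log (g₂ x).toReal ∂ν₂ = ∫ x, llr q₂ ν₂ x ∂q₂ := by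
    rw [← integral_rnDeriv_smul hq2ac]
    simp_rw [smul_eq_mul, llr]
    rfl
  have hE1' : ∫ x, llr q₁ ν₁ x ∂q₁ = ∫ p, llr q₁ ν₁ p.1 ∂μ := by
    rw [hq₁d, integral_map measurable_fst.aemeasurable
      (stronglyMeasurable_llr _ _).aestronglyMeasurable]
  have hE2' : ∫ x, llr q₂ ν₂ x ∂q₂ = ∫ p, llr q₂ ν₂ p.2 ∂μ := by
    rw [hq₂d, integral_map measurable_snd.aemeasurable
      (stronglyMeasurable_llr _ _).aestronglyMeasurable]
  simp only [entRel]
  rw [hEν, hE1, hE2, hE1', hE2', hsum]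
  linarith
end

section
/- For real numbers η ∈ (0,1) and probability measure μ on a finite measure space E (with Lebesgue measure), if F ⊆ E is measurable with μ(F) ≥ 1 - η, then Ent(μ) ≤ (1-η)·log(Leb(F)) + η·log(Leb(E)) - η log η - (1-η) log(1-η), provided Leb(F) ≤ Leb(E). -/
open MeasureTheory Real

/-- Pure real-analysis key inequality. -/
lemma entropy_real_key (η a b v w V : ℝ) (hη0 : 0 < η) (hη1 : η < 1)
    (ha : 1 - η ≤ a) (hab : a + b = 1) (hb : 0 ≤ b) (hv : 0 < v) (hw : 0 ≤ w)
    (hvwV : v + w = V) (hbw : b = 0 ∨ 0 < w) :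
    a * Real.log v - a * Real.log a + (b * Real.log w - b * Real.log b) ≤
      (1 - η) * Real.log v + η * Real.log V - η * Real.log η
        - (1 - η) * Real.log (1 - η) := by
  have ha0 : 0 < a := by linarith
  have hV : 0 < V := by linarith
  have hvV : v ≤ V := by linarith
  have hlogvV : Real.log v ≤ Real.log V := Real.log_le_log hv hvV
  have hηlog : η * Real.log η ≤ 0 :=
    mul_nonpos_of_nonneg_of_nonpos hη0.le (Real.log_nonpos hη0.le hη1.le)
  have hη1log : (1 - η) * Real.log (1 - η) ≤ 0 :=
    mul_nonpos_of_nonneg_of_nonpos (by linarith)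
      (Real.log_nonpos (by linarith) (by linarith))
  rcases eq_or_lt_of_le hb with hb0 | hbpos
  · -- b = 0, a = 1
    have hb0 : b = 0 := hb0.symm
    have ha1 : a = 1 := by linarith
    subst hb0; subst ha1
    simp only [Real.log_one, mul_zero, zero_mul, sub_zero, one_mul, add_zero]
    have hm : η * Real.log v ≤ η * Real.log V :=
      mul_le_mul_of_nonneg_left hlogvV hη0.le
    linarith
  · -- b > 0, hence w > 0
    obtain rfl : b = 1 - a := by linarith
    have hwpos : 0 < w := by
      rcases hbw with h | h
      · exact absurd h.symm hbpos.ne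
      · exact h
    by_cases hcase : (1 - η) * V ≤ v
    · -- LHS ≤ log V ≤ RHS
      have h1 : a * (Real.log v - Real.log a - Real.log V) ≤ v / V - a := by
        have h := Real.log_le_sub_one_of_pos (show (0:ℝ) < v / (a * V) by positivity)
        rw [Real.log_div hv.ne' (by positivity), Real.log_mul ha0.ne' hV.ne'] at h
        calc a * (Real.log v - Real.log a - Real.log V)
            ≤ a * (v / (a * V) - 1) := by
              apply mul_le_mul_of_nonneg_left _ ha0.le; linarith
          _ = v / V - a := by field_simp
      have h2 : (1 - a) * (Real.log w - Real.log (1 - a) - Real.log V)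
          ≤ w / V - (1 - a) := by
        have h := Real.log_le_sub_one_of_pos
          (show (0:ℝ) < w / ((1 - a) * V) by positivity)
        rw [Real.log_div hwpos.ne' (by positivity),
          Real.log_mul hbpos.ne' hV.ne'] at h
        calc (1 - a) * (Real.log w - Real.log (1 - a) - Real.log V)
            ≤ (1 - a) * (w / ((1 - a) * V) - 1) := by
              apply mul_le_mul_of_nonneg_left _ hbpos.le; linarith
          _ = w / V - (1 - a) := by field_simp
      have hsum : v / V + w / V = 1 := by field_simp; linarith
      have hVsplit : a * Real.log V + (1 - a) * Real.log V = Real.log V := by ring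
      have hLHS : a * Real.log v - a * Real.log a
          + ((1 - a) * Real.log w - (1 - a) * Real.log (1 - a)) ≤ Real.log V := by
        nlinarith [h1, h2, hsum, hVsplit]
      -- log V ≤ RHS
      have hlogv_lb : Real.log (1 - η) + Real.log V ≤ Real.log v := by
        have := Real.log_le_log (mul_pos (show (0:ℝ) < 1 - η by linarith) hV) hcase
        rwa [Real.log_mul (by linarith) hV.ne'] at this
      have hmul := mul_le_mul_of_nonneg_left hlogv_lb (show (0:ℝ) ≤ 1 - η by linarith)
      nlinarith [hLHS, hmul, hηlog, hη1log]
    · -- v < (1-η) V : compare to weights (1-η, η)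
      push_neg at hcase
      have hg1 : a * (Real.log (1 - η) - Real.log a) ≤ (1 - η) - a := by
        have h := Real.log_le_sub_one_of_pos
          (div_pos (show (0:ℝ) < 1 - η by linarith) ha0)
        rw [Real.log_div (by linarith : (1:ℝ) - η ≠ 0) ha0.ne'] at h
        calc a * (Real.log (1 - η) - Real.log a) ≤ a * ((1 - η) / a - 1) := by
              apply mul_le_mul_of_nonneg_left _ ha0.le; linarith
          _ = (1 - η) - a := by field_simp
      have hg2 : (1 - a) * (Real.log η - Real.log (1 - a)) ≤ η - (1 - a) := by
        have h := Real.log_le_sub_one_of_pos (div_pos hη0 hbpos)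
        rw [Real.log_div hη0.ne' hbpos.ne'] at h
        calc (1 - a) * (Real.log η - Real.log (1 - a))
            ≤ (1 - a) * (η / (1 - a) - 1) := by
              apply mul_le_mul_of_nonneg_left _ hbpos.le; linarith
          _ = η - (1 - a) := by field_simp
      have hwηV : η * V < w := by nlinarith
      have hvw : v / (1 - η) ≤ w / η := by
        rw [div_le_div_iff₀ (by linarith) hη0]
        nlinarith
      have hlogcomp : Real.log v - Real.log (1 - η) ≤ Real.log w - Real.log η := by
        have := Real.log_le_log (div_pos hv (show (0:ℝ) < 1 - η by linarith)) hvw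
        rw [Real.log_div hv.ne' (by linarith : (1:ℝ) - η ≠ 0),
          Real.log_div hwpos.ne' hη0.ne'] at this
        linarith
      have hwV : Real.log w ≤ Real.log V := Real.log_le_log hwpos (by linarith)
      have haη : (0:ℝ) ≤ a - (1 - η) := by linarith
      have hshift := mul_le_mul_of_nonneg_left hlogcomp haη
      have hmul := mul_le_mul_of_nonneg_left hwV hη0.le
      nlinarith [hg1, hg2, hshift, hmul]

/-- Jensen's inequality for `x ↦ x log x` over a set of finite positive volume. -/
lemma jensen_mul_log {d : ℕ} (S : Set (Fin d → ℝ)) (hS : MeasurableSet S)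
    (hS0 : volume S ≠ 0) (hSfin : volume S ≠ ⊤)
    (f : (Fin d → ℝ) → ℝ) (hfnn : ∀ x, 0 ≤ f x)
    (hfi : IntegrableOn f S) (hgi : IntegrableOn (fun x => f x * Real.log (f x)) S) :
    (∫ x in S, f x) * Real.log ((∫ x in S, f x) / (volume S).toReal) ≤
      ∫ x in S, f x * Real.log (f x) := by
  haveI : IsFiniteMeasure (volume.restrict S) :=
    ⟨by rwa [Measure.restrict_apply_univ, lt_top_iff_ne_top]⟩
  haveI : NeZero (volume.restrict S) := ⟨by rwa [Ne, Measure.restrict_eq_zero]⟩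
  have hJ := Real.convexOn_mul_log.map_average_le Real.continuous_mul_log.continuousOn
    isClosed_Ici (Filter.Eventually.of_forall fun x => hfnn x) hfi hgi
  rw [average_eq, average_eq, measureReal_restrict_apply_univ, measureReal_def, smul_eq_mul, smul_eq_mul] at hJ
  set m := (volume S).toReal with hm
  have hmpos : 0 < m := ENNReal.toReal_pos hS0 hSfin
  set I := ∫ x in S, f x with hI
  have h1 : m⁻¹ * I = I / m := by rw [inv_mul_eq_div]
  rw [h1] at hJ
  have := mul_le_mul_of_nonneg_left hJ hmpos.le
  calc I * Real.log (I / m) = m * (I / m * Real.log (I / m)) := by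
        field_simp
    _ ≤ m * (m⁻¹ * ∫ x in S, f x * Real.log (f x)) := this
    _ = ∫ x in S, f x * Real.log (f x) := by field_simp

/-- entropy estimate for a probability measure putting mass at
least `1 - η` on a subset `F` of `E`. -/
theorem entropy_concentration_bound
    {d : ℕ} (E F : Set (Fin d → ℝ)) (hE : MeasurableSet E) (hF : MeasurableSet F)
    (hFE : F ⊆ E) (hEpos : 0 < volume E) (hEfin : volume E < ⊤)
    (hFle : volume F ≤ volume E)
    (η : ℝ) (hη0 : 0 < η) (hη1 : η < 1)
    (f : (Fin d → ℝ) → ℝ) (hf : Measurable f) (hfnn : ∀ x, 0 ≤ f x)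
    (μ : Measure (Fin d → ℝ)) [IsProbabilityMeasure μ]
    (hμ : μ = volume.withDensity (fun x => ENNReal.ofReal (f x)))
    (hsupp : μ Eᶜ = 0)
    (hμF : 1 - η ≤ (μ F).toReal)
    (hint : Integrable (fun x => f x * Real.log (f x))) :
    -∫ x, f x * Real.log (f x) ≤
      (1 - η) * Real.log ((volume F).toReal) + η * Real.log ((volume E).toReal)
        - η * Real.log η - (1 - η) * Real.log (1 - η) := by
  have hG : MeasurableSet (E \ F) := hE.diff hF
  have habs : μ ≪ volume := hμ ▸ withDensity_absolutelyContinuous _ _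
  have hμset : ∀ S : Set (Fin d → ℝ), MeasurableSet S →
      μ S = ∫⁻ x in S, ENNReal.ofReal (f x) ∂volume := fun S hS => by
    rw [hμ, withDensity_apply _ hS]
  -- basic volume facts
  have hFvol_fin : volume F ≠ ⊤ := (lt_of_le_of_lt hFle hEfin).ne
  have hGvol_le : volume (E \ F) ≤ volume E := measure_mono Set.diff_subset
  have hGvol_fin : volume (E \ F) ≠ ⊤ := (lt_of_le_of_lt hGvol_le hEfin).ne
  set v := (volume F).toReal with hv_def
  set w := (volume (E \ F)).toReal with hw_def
  set V := (volume E).toReal with hV_def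
  set a := (μ F).toReal with ha_def
  set b := (μ (E \ F)).toReal with hb_def
  -- μ E = 1
  have hμE1 : μ E = 1 := by
    have h := measure_add_measure_compl (μ := μ) hE
    rw [hsupp, add_zero, measure_univ] at h
    exact h
  -- a + b = 1
  have hab : a + b = 1 := by
    have h : μ F + μ (E \ F) = 1 := by
      rw [← measure_union Set.disjoint_sdiff_right hG, Set.union_diff_cancel hFE, hμE1]
    rw [ha_def, hb_def, ← ENNReal.toReal_add (measure_ne_top μ F) (measure_ne_top μ _), h,
      ENNReal.toReal_one]
  -- v + w = V
  have hvwV : v + w = V := by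
    have h : volume F + volume (E \ F) = volume E := by
      rw [← measure_union Set.disjoint_sdiff_right hG, Set.union_diff_cancel hFE]
    rw [hv_def, hw_def, hV_def, ← ENNReal.toReal_add hFvol_fin hGvol_fin, h]
  -- positivity of a and v
  have hapos : 0 < a := lt_of_lt_of_le (by linarith) hμF
  have hFvol0 : volume F ≠ 0 := by
    intro h0
    have : μ F = 0 := habs h0
    rw [ha_def, this] at hapos
    simp at hapos
  have hvpos : 0 < v := ENNReal.toReal_pos hFvol0 hFvol_fin
  have hwnn : 0 ≤ w := ENNReal.toReal_nonneg
  -- integrability of f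
  have hf_int : Integrable f volume := by
    refine ⟨hf.aestronglyMeasurable, ?_⟩
    rw [hasFiniteIntegral_iff_ofReal (Filter.Eventually.of_forall hfnn)]
    have h : ∫⁻ x, ENNReal.ofReal (f x) ∂volume = μ Set.univ := by
      rw [hμ, withDensity_apply _ MeasurableSet.univ, Measure.restrict_univ]
    rw [h, measure_univ]
    exact ENNReal.one_lt_top
  -- set integrals of f equal μ-masses
  have hfint : ∀ S : Set (Fin d → ℝ), MeasurableSet S →
      ∫ x in S, f x = (μ S).toReal := fun S hS => by
    rw [hμset _ hS, integral_eq_lintegral_of_nonneg_ae (Filter.Eventually.of_forall hfnn)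
      hf.aestronglyMeasurable.restrict]
  -- integral splits
  have h_compl : ∫ x in Eᶜ, f x * Real.log (f x) ∂volume = 0 := by
    have h0 : ∫⁻ x in Eᶜ, ENNReal.ofReal (f x) ∂volume = 0 := by
      rw [← hμset _ hE.compl]; exact hsupp
    have hz := (lintegral_eq_zero_iff hf.ennreal_ofReal).mp h0
    apply integral_eq_zero_of_ae
    filter_upwards [hz] with x hx
    have hx0 : ENNReal.ofReal (f x) = 0 := hx
    have : f x = 0 := le_antisymm (ENNReal.ofReal_eq_zero.mp hx0) (hfnn x)
    simp [this]
  have hsplit : ∫ x, f x * Real.log (f x) =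
      (∫ x in F, f x * Real.log (f x)) + ∫ x in E \ F, f x * Real.log (f x) := by
    have h2 : (∫ x in E, f x * Real.log (f x)) + ∫ x in Eᶜ, f x * Real.log (f x)
        = ∫ x, f x * Real.log (f x) := integral_add_compl hE hint
    have h3 : ∫ x in E, f x * Real.log (f x) =
        (∫ x in F, f x * Real.log (f x)) + ∫ x in E \ F, f x * Real.log (f x) := by
      rw [← setIntegral_union Set.disjoint_sdiff_right hG hint.integrableOn hint.integrableOn,
        Set.union_diff_cancel hFE]
    linarith
  -- Jensen on F
  have hFkey : a * Real.log a - a * Real.log v ≤ ∫ x in F, f x * Real.log (f x) := by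
    have hJ := jensen_mul_log F hF hFvol0 hFvol_fin f hfnn hf_int.integrableOn
      hint.integrableOn
    rw [hfint F hF] at hJ
    rw [← ha_def, Real.log_div hapos.ne' hvpos.ne'] at hJ
    linarith [hJ]
  -- Jensen (or triviality) on E \ F
  have hGkey : b * Real.log b - b * Real.log w ≤ ∫ x in E \ F, f x * Real.log (f x) := by
    by_cases hb0 : μ (E \ F) = 0
    · have hbz : b = 0 := by rw [hb_def, hb0]; simp
      rw [hbz]
      have h0 : ∫⁻ x in E \ F, ENNReal.ofReal (f x) ∂volume = 0 := by
        rw [← hμset _ hG]; exact hb0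
      have hz := (lintegral_eq_zero_iff hf.ennreal_ofReal).mp h0
      have : ∫ x in E \ F, f x * Real.log (f x) = 0 := by
        apply integral_eq_zero_of_ae
        filter_upwards [hz] with x hx
        have hx0 : ENNReal.ofReal (f x) = 0 := hx
        have : f x = 0 := le_antisymm (ENNReal.ofReal_eq_zero.mp hx0) (hfnn x)
        simp [this]
      rw [this]; simp
    · have hGvol0 : volume (E \ F) ≠ 0 := fun h0 => hb0 (habs h0)
      have hwpos : 0 < w := ENNReal.toReal_pos hGvol0 hGvol_fin
      have hbpos : 0 < b :=
        ENNReal.toReal_pos hb0 (measure_ne_top μ _)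
      have hJ := jensen_mul_log (E \ F) hG hGvol0 hGvol_fin f hfnn hf_int.integrableOn
        hint.integrableOn
      rw [hfint _ hG] at hJ
      rw [← hb_def, Real.log_div hbpos.ne' hwpos.ne'] at hJ
      linarith [hJ]
  -- hbw
  have hbw : b = 0 ∨ 0 < w := by
    by_cases h : volume (E \ F) = 0
    · left
      have : μ (E \ F) = 0 := habs h
      rw [hb_def, this]; simp
    · right; exact ENNReal.toReal_pos h hGvol_fin
  have hbnn : 0 ≤ b := ENNReal.toReal_nonneg
  have hreal := entropy_real_key η a b v w V hη0 hη1 hμF hab hbnn hvpos hwnn hvwV hbw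
  linarith [hFkey, hGkey, hreal, hsplit]
end

section
/- Conditional entropy chain rule with group averaging: let μ be a probability measure of finite entropy on R^d equipped with a measure-preserving action of a compact group G with Haar probability measure h, let μ_G be the average over G of g_*μ, and assume μ ≪ μ_G with density ρ. Then -∫_{R^d} ρ log ρ dμ_G = ∫∫ [the relative entropy of the 'fiber density' u ↦ ρ(u·x) with respect to Haar measure h] dμ_G(x), i.e. Ent(μ|μ_G) = ∫ Ent(ρ(u·x) h(du) | h(du)) dμ_G(x). -/
open MeasureTheory Real

/-- disintegration of the relative entropy `Ent(μ|μ_G)` over the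
orbits of a measure-preserving compact group action: for the density
`ρ = dμ/dμ_G`, `-∫ ρ log ρ dμ_G = ∫ Ent(ρ(u•x) h(du) | h(du)) dμ_G(x)`. -/
theorem relative_entropy_orbit_disintegration
    {d : ℕ} {G : Type*} [Group G] [TopologicalSpace G] [IsTopologicalGroup G]
    [CompactSpace G] [MeasurableSpace G] [BorelSpace G]
    (h : Measure G) [h.IsHaarMeasure] [IsProbabilityMeasure h]
    [MulAction G (Fin d → ℝ)]
    (hmeas : Measurable (fun p : G × (Fin d → ℝ) => p.1 • p.2))
    (hpres : ∀ g : G, MeasurePreserving (fun x : Fin d → ℝ => g • x) volume volume)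
    (μ : Measure (Fin d → ℝ)) [IsProbabilityMeasure μ]
    (hacvol : μ ≪ volume)
    (hintent : Integrable
      (fun x => ((μ.rnDeriv volume x).toReal) * Real.log ((μ.rnDeriv volume x).toReal)))
    (μG : Measure (Fin d → ℝ))
    (hμG : μG = (h.prod μ).map (fun p : G × (Fin d → ℝ) => p.1 • p.2))
    (hac : μ ≪ μG)
    (ρ : (Fin d → ℝ) → ℝ) (hρm : Measurable ρ) (hρnn : ∀ x, 0 ≤ ρ x)
    (hρ : μ = μG.withDensity (fun x => ENNReal.ofReal (ρ x)))
    (hdens : ∀ᵐ x ∂μG, ∫ u, ρ (u • x) ∂h = 1)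
    (hint : Integrable (fun x => ρ x * Real.log (ρ x)) μG)
    (hintfib : Integrable
      (fun x => ∫ u, ρ (u • x) * Real.log (ρ (u • x)) ∂h) μG) :
    -∫ x, ρ x * Real.log (ρ x) ∂μG =
      ∫ x, (-∫ u, ρ (u • x) * Real.log (ρ (u • x)) ∂h) ∂μG := by

  have hFm : Measurable (fun x : Fin d → ℝ => ρ x * Real.log (ρ x)) :=
    hρm.mul (Real.measurable_log.comp hρm)
  set F : (Fin d → ℝ) → ℝ := fun x => ρ x * Real.log (ρ x) with hF
  have hsmul : ∀ u : G, Measurable (fun x : Fin d → ℝ => u • x) := fun u =>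
    hmeas.comp (measurable_const.prodMk measurable_id)
  have hμGprob : IsProbabilityMeasure μG := by
    rw [hμG]; exact Measure.isProbabilityMeasure_map hmeas.aemeasurable
  -- μG is invariant under each u ∈ G, using left invariance of h
  have hinv : ∀ u : G, μG.map (fun x => u • x) = μG := by
    intro u
    conv_rhs => rw [hμG]
    rw [hμG, Measure.map_map (hsmul u) hmeas]
    have hcomp : ((fun x : Fin d → ℝ => u • x) ∘ fun p : G × (Fin d → ℝ) => p.1 • p.2)
        = (fun p : G × (Fin d → ℝ) => p.1 • p.2) ∘ (Prod.map (fun v : G => u * v) id) := by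
      funext p
      simp [Function.comp, Prod.map, mul_smul]
    rw [hcomp, ← Measure.map_map hmeas ((measurable_const_mul u).prodMap measurable_id),
      ← Measure.map_prod_map _ _ (measurable_const_mul u) measurable_id,
      map_mul_left_eq_self, Measure.map_id]
  have key : ∀ u : G, ∫ x, F (u • x) ∂μG = ∫ x, F x ∂μG := by
    intro u
    conv_rhs => rw [← hinv u]
    rw [integral_map (hsmul u).aemeasurable hFm.aestronglyMeasurable]
  have keyl : ∀ u : G, ∫⁻ x, ‖F (u • x)‖₊ ∂μG = ∫⁻ x, ‖F x‖₊ ∂μG := by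
    intro u
    conv_rhs => rw [← hinv u]
    rw [lintegral_map (hFm.nnnorm.coe_nnreal_ennreal) (hsmul u)]
  have hFint : Integrable (fun p : G × (Fin d → ℝ) => F (p.1 • p.2)) (h.prod μG) := by
    refine ⟨(hFm.comp hmeas).aestronglyMeasurable, ?_⟩
    simp only [HasFiniteIntegral, enorm_eq_nnnorm]
    rw [
      lintegral_prod (fun p : G × (Fin d → ℝ) => (‖F (p.1 • p.2)‖₊ : ENNReal))
        ((hFm.comp hmeas).nnnorm.coe_nnreal_ennreal).aemeasurable]
    simp only [keyl]
    rw [lintegral_const, measure_univ, mul_one]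
    exact hint.2
  have e1 : ∫ p : G × (Fin d → ℝ), F (p.1 • p.2) ∂(h.prod μG) = ∫ x, F x ∂μG := by
    rw [integral_prod _ hFint]
    simp only [key]
    rw [integral_const, probReal_univ, one_smul]
  have e2 : ∫ p : G × (Fin d → ℝ), F (p.1 • p.2) ∂(h.prod μG)
      = ∫ x, ∫ u, F (u • x) ∂h ∂μG := integral_prod_symm _ hFint
  have : ∫ x, (-∫ u, F (u • x) ∂h) ∂μG = -∫ x, ∫ u, F (u • x) ∂h ∂μG := integral_neg _
  rw [show (fun x => ρ x * Real.log (ρ x)) = F from rfl] at *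
  calc -∫ x, F x ∂μG = -∫ x, ∫ u, F (u • x) ∂h ∂μG := by rw [← e1, e2]
    _ = ∫ x, (-∫ u, F (u • x) ∂h) ∂μG := (integral_neg _).symm
end
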